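/- arXiv:1709.01168 — 6 statements merged into one kernel-verified Lean document; each statement's English description precedes it below -/
import Mathlib

section
/- Let Σ̂ be an n×n real symmetric positive definite matrix and let γ_i := (Σ̂⁻¹)_{ii} denote the i-th diagonal entry of Σ̂⁻¹ (each γ_i > 0). Then for every diagonal matrix Σ_D = diag(d_1,…,d_n) with all d_i > 0, one has 2·D(Σ_D‖Σ̂) ≥ log det( dd(Σ̂⁻¹)·Σ̂ ), and equality holds for Σ_D = diag(γ_1⁻¹,…,γ_n⁻¹); that is, the minimum of 2·D(Σ_D‖Σ̂) over positive diagonal Σ_D equals δ_max(Σ̂) := log det( dd(Σ̂⁻¹)·Σ̂ ) and is attained at Σ_D = diag(γ_1⁻¹,…,γ_n⁻¹). -/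
noncomputable def klDiv {n : ℕ} (S₁ S₂ : Matrix (Fin n) (Fin n) ℝ) : ℝ :=
  (1 / 2 : ℝ) * (-Real.log S₁.det + Real.log S₂.det + (S₁ * S₂⁻¹).trace - n)

def dd {n : ℕ} (M : Matrix (Fin n) (Fin n) ℝ) : Matrix (Fin n) (Fin n) ℝ :=
  Matrix.diagonal fun i => M i i

lemma diagPos {n : ℕ} {M : Matrix (Fin n) (Fin n) ℝ} (hM : M.PosDef) (i : Fin n) :
    0 < M i i := by
  have h := hM.re_dotProduct_pos (x := Pi.single i 1) (fun h => by simpa using congrFun h i)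
  simpa [Matrix.mulVec_single, dotProduct, Pi.single_apply] using h

lemma twoKl {n : ℕ} (S : Matrix (Fin n) (Fin n) ℝ) (d : Fin n → ℝ) :
    2 * klDiv (Matrix.diagonal d) S =
      -Real.log (∏ i, d i) + Real.log S.det + (∑ i, d i * S⁻¹ i i) - n := by
  have ht : (Matrix.diagonal d * S⁻¹).trace = ∑ i, d i * S⁻¹ i i := by
    simp [Matrix.trace, Matrix.diag, Matrix.mul_apply, Matrix.diagonal_apply,
      Finset.sum_ite_eq, Finset.mem_univ]
  simp [klDiv, ht, Matrix.det_diagonal]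
  try ring

/-- For `Ŝ` symmetric positive definite with `γᵢ := (Ŝ⁻¹)ᵢᵢ > 0`:
`2·D(Σ_D‖Ŝ) ≥ log det(dd(Ŝ⁻¹)·Ŝ)` for every positive diagonal `Σ_D = diag(d)`, with
equality at `Σ_D = diag(γ₁⁻¹,…,γ_n⁻¹)`; i.e. the minimum equals
`δ_max(Ŝ) = log det(dd(Ŝ⁻¹)·Ŝ)` and is attained there. -/
theorem stmt3 {n : ℕ} (S : Matrix (Fin n) (Fin n) ℝ) (hS : S.PosDef) :
    (∀ i, 0 < S⁻¹ i i) ∧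
    (∀ d : Fin n → ℝ, (∀ i, 0 < d i) →
      2 * klDiv (Matrix.diagonal d) S ≥ Real.log ((dd S⁻¹ * S).det)) ∧
    2 * klDiv (Matrix.diagonal fun i => (S⁻¹ i i)⁻¹) S
      = Real.log ((dd S⁻¹ * S).det) := by
  have hA : (S⁻¹).PosDef := hS.inv
  have hγ : ∀ i, 0 < S⁻¹ i i := diagPos hA
  have hdet : 0 < S.det := hS.det_pos
  have hRHS : Real.log ((dd S⁻¹ * S).det) = (∑ i, Real.log (S⁻¹ i i)) + Real.log S.det := by
    rw [dd, Matrix.det_mul, Matrix.det_diagonal,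
      Real.log_mul (ne_of_gt (Finset.prod_pos fun i _ => hγ i)) (ne_of_gt hdet), Real.log_prod]
    intro i _; exact ne_of_gt (hγ i)
  refine ⟨hγ, fun d hd => ?_, ?_⟩
  · rw [twoKl, hRHS, Real.log_prod (fun i _ => ne_of_gt (hd i)), ge_iff_le]
    have key : ∀ i, Real.log (d i) + Real.log (S⁻¹ i i) + 1 ≤ d i * S⁻¹ i i := by
      intro i
      have h1 : Real.log (d i * S⁻¹ i i) ≤ d i * S⁻¹ i i - 1 :=
        Real.log_le_sub_one_of_pos (mul_pos (hd i) (hγ i))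
      rw [Real.log_mul (ne_of_gt (hd i)) (ne_of_gt (hγ i))] at h1
      linarith
    have hsum : ∑ i, (Real.log (d i) + Real.log (S⁻¹ i i) + 1) ≤ ∑ i, d i * S⁻¹ i i :=
      Finset.sum_le_sum fun i _ => key i
    simp only [Finset.sum_add_distrib, Finset.sum_const, Finset.card_univ,
      Fintype.card_fin, nsmul_eq_mul, mul_one] at hsum
    linarith
  · rw [twoKl, hRHS, Real.log_prod (fun i _ => ne_of_gt (inv_pos.mpr (hγ i)))]
    have : ∀ i, (S⁻¹ i i)⁻¹ * S⁻¹ i i = 1 := fun i => inv_mul_cancel₀ (ne_of_gt (hγ i))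
    simp only [this, Real.log_inv, Finset.sum_const, Finset.card_univ, Fintype.card_fin,
      nsmul_eq_mul, mul_one, Finset.sum_neg_distrib]
    ring
end

section
/- Let Σ̂ be an n×n real symmetric positive definite matrix and δ ∈ ℝ. Let λ > 0 and let Γ, Θ be n×n real symmetric matrices with Γ ⪰ 0, I + Γ − ofd(Θ) ⪰ 0, and Σ̂⁻¹ + λ⁻¹(ofd(Θ) − Γ) ≻ 0, and set Λ := I + Γ − ofd(Θ). Define the Lagrangian 𝓛(L,Σ) := tr(L) + λ(−log det Σ + log det Σ̂ − n + tr(Σ̂⁻¹Σ) − δ) − tr(ΛL) − tr(Γ(Σ−L)) + tr(ofd(Θ)(Σ−L)). Then the infimum of 𝓛(L,Σ) over all symmetric L and all symmetric positive definite Σ equals J(λ,Γ,Θ) := λ( log det(Σ̂⁻¹ + λ⁻¹(ofd(Θ) − Γ)) + log det Σ̂ − δ ), and this infimum is attained at Σ = λ(λΣ̂⁻¹ − Γ + ofd(Θ))⁻¹ (with arbitrary L). -/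
/-- `ofd M := M − dd M`: `M` with its diagonal entries set to zero. -/
def ofd {n : ℕ} (M : Matrix (Fin n) (Fin n) ℝ) : Matrix (Fin n) (Fin n) ℝ :=
  M - dd M

/-- The Lagrangian `𝓛(L,Σ)` with multipliers `λ, Γ, Θ` and `Λ := I + Γ − ofd(Θ)`. -/
noncomputable def lagr {n : ℕ} (S : Matrix (Fin n) (Fin n) ℝ) (δ l : ℝ)
    (Γ Θ L X : Matrix (Fin n) (Fin n) ℝ) : ℝ :=
  L.trace + l * (-Real.log X.det + Real.log S.det - n + (S⁻¹ * X).trace - δ)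
    - ((1 + Γ - ofd Θ) * L).trace - (Γ * (X - L)).trace + (ofd Θ * (X - L)).trace

lemma trace_eq_sum_eig {n : ℕ} {B : Matrix (Fin n) (Fin n) ℝ} (hB : B.IsHermitian) :
    B.trace = ∑ i, hB.eigenvalues i := by
  conv_lhs => rw [hB.spectral_theorem]
  rw [Unitary.conjStarAlgAut_apply, Matrix.trace_mul_cycle,
    (Matrix.mem_unitaryGroup_iff').mp (hB.eigenvectorUnitary).2, Matrix.one_mul,
    Matrix.trace_diagonal]
  simp

lemma trace_ge_aux {n : ℕ} {B : Matrix (Fin n) (Fin n) ℝ} (hB : B.PosSemidef)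
    (hdet : 0 < B.det) : (n : ℝ) + Real.log B.det ≤ B.trace := by
  have heig : ∀ i, 0 < hB.1.eigenvalues i := by
    intro i
    rcases (hB.eigenvalues_nonneg i).lt_or_eq with h | h
    · exact h
    · exfalso
      have := hB.1.det_eq_prod_eigenvalues
      rw [this, Finset.prod_eq_zero (Finset.mem_univ i) (by simp [← h])] at hdet
      exact lt_irrefl 0 hdet
  have hdet' : B.det = ∏ i, hB.1.eigenvalues i := by
    simpa using hB.1.det_eq_prod_eigenvalues
  rw [hdet', Real.log_prod (fun i _ => (heig i).ne'), trace_eq_sum_eig hB.1]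
  have h1 : ∀ i ∈ Finset.univ, (1 : ℝ) + Real.log (hB.1.eigenvalues i) ≤ hB.1.eigenvalues i := by
    intro i _
    have := Real.log_le_sub_one_of_pos (heig i)
    linarith
  calc (n : ℝ) + ∑ i, Real.log (hB.1.eigenvalues i)
      = ∑ i : Fin n, (1 + Real.log (hB.1.eigenvalues i)) := by
        rw [Finset.sum_add_distrib]; simp
    _ ≤ ∑ i, hB.1.eigenvalues i := Finset.sum_le_sum h1

lemma lagr_eq {n : ℕ} (S : Matrix (Fin n) (Fin n) ℝ) (δ l : ℝ) (hl : l ≠ 0)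
    (Γ Θ L X : Matrix (Fin n) (Fin n) ℝ) :
    lagr S δ l Γ Θ L X =
      l * (((S⁻¹ + l⁻¹ • (ofd Θ - Γ)) * X).trace - Real.log X.det - n
        + Real.log S.det - δ) := by
  unfold lagr
  simp only [Matrix.add_mul, Matrix.sub_mul, Matrix.mul_sub, Matrix.one_mul,
    Matrix.smul_mul, Matrix.trace_add, Matrix.trace_sub, Matrix.trace_smul, smul_eq_mul]
  field_simp
  ring

/-- Under the stated conditions on the multipliers, the infimum of the
Lagrangian over symmetric `L` and positive definite symmetric `Σ` equals
`J(λ,Γ,Θ) = λ(log det(Ŝ⁻¹ + λ⁻¹(ofd(Θ) − Γ)) + log det Ŝ − δ)`, attained at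
`Σ = λ(λŜ⁻¹ − Γ + ofd(Θ))⁻¹` (with arbitrary `L`). -/
theorem stmt5 {n : ℕ} (S : Matrix (Fin n) (Fin n) ℝ) (hS : S.PosDef) (δ : ℝ)
    (l : ℝ) (hl : 0 < l) (Γ Θ : Matrix (Fin n) (Fin n) ℝ)
    (hΓs : Γ.IsSymm) (hΘs : Θ.IsSymm)
    (hΓ : Γ.PosSemidef) (hΛ : (1 + Γ - ofd Θ).PosSemidef)
    (hpd : (S⁻¹ + l⁻¹ • (ofd Θ - Γ)).PosDef) :
    (l • (l • S⁻¹ - Γ + ofd Θ)⁻¹ : Matrix (Fin n) (Fin n) ℝ).PosDef ∧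
    (∀ L X : Matrix (Fin n) (Fin n) ℝ, L.IsSymm → X.PosDef →
      lagr S δ l Γ Θ L X ≥
        l * (Real.log ((S⁻¹ + l⁻¹ • (ofd Θ - Γ)).det) + Real.log S.det - δ)) ∧
    (∀ L : Matrix (Fin n) (Fin n) ℝ, L.IsSymm →
      lagr S δ l Γ Θ L (l • (l • S⁻¹ - Γ + ofd Θ)⁻¹) =
        l * (Real.log ((S⁻¹ + l⁻¹ • (ofd Θ - Γ)).det) + Real.log S.det - δ)) := by
  set A : Matrix (Fin n) (Fin n) ℝ := S⁻¹ + l⁻¹ • (ofd Θ - Γ) with hA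
  have hl0 : l ≠ 0 := hl.ne'
  have hlA : l • S⁻¹ - Γ + ofd Θ = l • A := by
    rw [hA, smul_add, smul_smul, mul_inv_cancel₀ hl0, one_smul]
    abel
  have hAdetU : IsUnit A.det := hpd.det_pos.ne'.isUnit
  have : Invertible l := invertibleOfNonzero hl0
  have hXeq : l • (l • S⁻¹ - Γ + ofd Θ)⁻¹ = A⁻¹ := by
    rw [hlA]
    have hlAdet : IsUnit (l • A).det := by
      rw [Matrix.det_smul]
      exact ((isUnit_iff_ne_zero.2 hl0).pow _).mul hAdetU
    have h1 : A * (l • (l • A)⁻¹) = 1 := by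
      rw [Matrix.mul_smul, ← Matrix.smul_mul, Matrix.mul_nonsing_inv _ hlAdet]
    exact (Matrix.inv_eq_right_inv h1).symm
  have hXpd : (A⁻¹).PosDef := hpd.inv
  refine ⟨by rw [hXeq]; exact hXpd, ?_, ?_⟩
  · intro L X _ hX
    rw [lagr_eq S δ l hl0 Γ Θ L X]
    -- key inequality: n + log det A + log det X ≤ trace (A * X)
    set Q : Matrix (Fin n) (Fin n) ℝ := (open scoped MatrixOrder in CFC.sqrt X) with hQ
    have hQherm : Q.IsHermitian := (open scoped MatrixOrder in (Matrix.nonneg_iff_posSemidef.mp (CFC.sqrt_nonneg X)).1)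
    have hB : (Q * A * Q).PosSemidef := by
      have := hpd.posSemidef.mul_mul_conjTranspose_same Q
      rwa [hQherm.eq] at this
    have hQQ : Q * Q = X := (open scoped MatrixOrder in CFC.sqrt_mul_sqrt_self X hX.posSemidef.nonneg)
    have hBtr : (Q * A * Q).trace = (A * X).trace := by
      rw [Matrix.trace_mul_cycle, hQQ, Matrix.trace_mul_comm]
    have hBdet : (Q * A * Q).det = A.det * X.det := by
      rw [Matrix.det_mul, Matrix.det_mul, ← hQQ, Matrix.det_mul]
      ring
    have hdetpos : 0 < (Q * A * Q).det := by
      rw [hBdet]; exact mul_pos hpd.det_pos hX.det_pos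
    have key := trace_ge_aux hB hdetpos
    rw [hBtr, hBdet, Real.log_mul hpd.det_pos.ne' hX.det_pos.ne'] at key
    have : Real.log A.det + Real.log S.det - δ ≤
        ((A * X).trace - Real.log X.det - n + Real.log S.det - δ) := by linarith
    exact mul_le_mul_of_nonneg_left this hl.le
  · intro L _
    rw [hXeq, lagr_eq S δ l hl0 Γ Θ L A⁻¹, Matrix.mul_nonsing_inv _ hAdetU,
      Matrix.trace_one, Matrix.det_nonsing_inv, Ring.inverse_eq_inv, Real.log_inv,
      Fintype.card_fin]
    push_cast
    ring
end

section
/- Let Σ̂ be an n×n real symmetric positive definite matrix and suppose 0 < δ < δ_max(Σ̂) := log det( dd(Σ̂⁻¹)·Σ̂ ). Then: (i) for every λ̄ > 0, the matrix Σ̂⁻¹ + λ̄⁻¹(−λ̄·ofd(Σ̂⁻¹)) = dd(Σ̂⁻¹) is positive definite and J̃(λ̄, 0, −λ̄·ofd(Σ̂⁻¹)) = −λ̄(δ_max(Σ̂) − δ) < 0; (ii) there exists λ̄ > 0 such that the triple (λ̄, 0, −λ̄·ofd(Σ̂⁻¹)) belongs to C₂; consequently inf_{(λ,Γ,Θ)∈C₂}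 J̃(λ,Γ,Θ) < 0. -/
/-- The dual objective `J̃(λ,Γ,Θ) := λ(−log det(Ŝ⁻¹ + λ⁻¹(ofd(Θ) − Γ)) − log det Ŝ + δ)`. -/
noncomputable def Jt {n : ℕ} (S : Matrix (Fin n) (Fin n) ℝ) (δ : ℝ)
    (l : ℝ) (Γ Θ : Matrix (Fin n) (Fin n) ℝ) : ℝ :=
  l * (-Real.log ((S⁻¹ + l⁻¹ • (ofd Θ - Γ)).det) - Real.log S.det + δ)

/-- The constraint set `C₂`. -/
def C2 {n : ℕ} (S : Matrix (Fin n) (Fin n) ℝ)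
    (l : ℝ) (Γ Θ : Matrix (Fin n) (Fin n) ℝ) : Prop :=
  0 < l ∧ Γ.IsDiag ∧ Γ.PosSemidef ∧ Θ.IsSymm ∧ (∀ i, Θ i i = 0) ∧
    (1 + Γ - Θ).PosSemidef ∧ (S⁻¹ + l⁻¹ • (Θ - Γ)).PosDef

lemma posDef_diag_pos {n : ℕ} {M : Matrix (Fin n) (Fin n) ℝ} (h : M.PosDef) (i : Fin n) :
    0 < M i i := by
  have := (Matrix.posDef_iff_dotProduct_mulVec.mp h).2 (x := Pi.single i 1) (by
    intro hx
    have := congrFun hx i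
    simp at this)
  simpa [Matrix.mulVec_single, dotProduct, Pi.single_apply] using this

lemma psd_smul {n : ℕ} {M : Matrix (Fin n) (Fin n) ℝ} (h : M.PosSemidef) {c : ℝ} (hc : 0 ≤ c) :
    (c • M).PosSemidef := by
  refine Matrix.posSemidef_iff_dotProduct_mulVec.mpr ⟨?_, fun x => ?_⟩
  · unfold Matrix.IsHermitian
    rw [Matrix.conjTranspose_smul, h.1]
    simp
  · rw [Matrix.smul_mulVec, dotProduct_smul]
    exact mul_nonneg hc (h.dotProduct_mulVec_nonneg x)

lemma ofd_diag {n : ℕ} (M : Matrix (Fin n) (Fin n) ℝ) (i : Fin n) : ofd M i i = 0 := by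
  simp [ofd, dd, Matrix.sub_apply]

lemma theta_diag {n : ℕ} (M : Matrix (Fin n) (Fin n) ℝ) (l : ℝ) (i : Fin n) :
    (-(l • ofd M)) i i = 0 := by
  simp [ofd_diag]

lemma ofd_theta {n : ℕ} (M : Matrix (Fin n) (Fin n) ℝ) (l : ℝ) :
    ofd (-(l • ofd M)) = -(l • ofd M) := by
  have h0 : (fun i => (-(l • ofd M)) i i) = fun _ => (0 : ℝ) :=
    funext fun i => theta_diag M l i
  have hdd0 : dd (-(l • ofd M)) = 0 := by
    unfold dd
    rw [h0, Matrix.diagonal_zero]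
  unfold ofd
  rw [show dd (-(l • (M - dd M))) = 0 from hdd0, sub_zero]

lemma key_eq {n : ℕ} (S : Matrix (Fin n) (Fin n) ℝ) {l : ℝ} (hl : 0 < l) :
    S⁻¹ + l⁻¹ • ((-(l • ofd S⁻¹)) - 0) = dd S⁻¹ := by
  rw [sub_zero, smul_neg, smul_smul, inv_mul_cancel₀ hl.ne', one_smul]
  simp [ofd]

/-- For `Ŝ ≻ 0` and `0 < δ < δ_max(Ŝ) := log det(dd(Ŝ⁻¹)Ŝ)`:
(i) for every `λ̄ > 0` the matrix `Ŝ⁻¹ + λ̄⁻¹·ofd(−λ̄·ofd(Ŝ⁻¹))` equals `dd(Ŝ⁻¹)`, is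
positive definite, and `J̃(λ̄, 0, −λ̄·ofd(Ŝ⁻¹)) = −λ̄(δ_max − δ) < 0`;
(ii) there exists `λ̄ > 0` with `(λ̄, 0, −λ̄·ofd(Ŝ⁻¹)) ∈ C₂`; consequently some triple
in `C₂` has negative dual objective. -/
theorem stmt7 {n : ℕ} (S : Matrix (Fin n) (Fin n) ℝ) (hS : S.PosDef)
    (δ : ℝ) (hδ : 0 < δ) (hδmax : δ < Real.log ((dd S⁻¹ * S).det)) :
    (∀ l : ℝ, 0 < l →
      S⁻¹ + l⁻¹ • (ofd (-(l • ofd S⁻¹)) - 0) = dd S⁻¹ ∧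
      (dd S⁻¹).PosDef ∧
      Jt S δ l 0 (-(l • ofd S⁻¹)) = -(l * (Real.log ((dd S⁻¹ * S).det) - δ)) ∧
      -(l * (Real.log ((dd S⁻¹ * S).det) - δ)) < 0) ∧
    (∃ l : ℝ, 0 < l ∧ C2 S l 0 (-(l • ofd S⁻¹))) ∧
    (∃ l Γ Θ, C2 S l Γ Θ ∧ Jt S δ l Γ Θ < 0) := by
  have hSinv : (S⁻¹).PosDef := hS.inv
  have hdiagpos : ∀ i, 0 < S⁻¹ i i := fun i => posDef_diag_pos hSinv i
  have hdd : (dd S⁻¹).PosDef := Matrix.PosDef.diagonal hdiagpos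
  have hlogsplit : Real.log ((dd S⁻¹ * S).det)
      = Real.log (dd S⁻¹).det + Real.log S.det := by
    rw [Matrix.det_mul, Real.log_mul hdd.det_pos.ne' hS.det_pos.ne']
  have hmain : ∀ l : ℝ, 0 < l →
      S⁻¹ + l⁻¹ • (ofd (-(l • ofd S⁻¹)) - 0) = dd S⁻¹ ∧
      (dd S⁻¹).PosDef ∧
      Jt S δ l 0 (-(l • ofd S⁻¹)) = -(l * (Real.log ((dd S⁻¹ * S).det) - δ)) ∧
      -(l * (Real.log ((dd S⁻¹ * S).det) - δ)) < 0 := by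
    intro l hl
    have heq : S⁻¹ + l⁻¹ • (ofd (-(l • ofd S⁻¹)) - 0) = dd S⁻¹ := by
      rw [ofd_theta]; exact key_eq S hl
    refine ⟨heq, hdd, ?_, ?_⟩
    · unfold Jt
      rw [heq, hlogsplit]
      ring
    · have : 0 < Real.log ((dd S⁻¹ * S).det) - δ := sub_pos.mpr hδmax
      simpa using mul_pos hl this
  refine ⟨hmain, ?_⟩
  -- part (ii)
  set s : ℝ := ∑ i, S⁻¹ i i with hs
  have hs0 : 0 ≤ s := Finset.sum_nonneg fun i _ => (hdiagpos i).le
  set l : ℝ := (1 + s)⁻¹ with hldef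
  have h1s : 0 < 1 + s := by linarith
  have hl : 0 < l := inv_pos.mpr h1s
  have hC2 : C2 S l 0 (-(l • ofd S⁻¹)) := by
    refine ⟨hl, Matrix.isDiag_zero, Matrix.PosSemidef.zero, ?_, fun i => theta_diag _ _ i, ?_, ?_⟩
    · -- Θ symmetric
      have hsym : (S⁻¹).IsSymm := hSinv.1
      have h1 : (ofd S⁻¹).IsSymm := by
        unfold ofd dd
        exact hsym.sub (Matrix.isSymm_diagonal _)
      unfold Matrix.IsSymm at *
      simp [h1]
    · -- 1 + 0 - Θ PSD
      have hrw : (1 : Matrix (Fin n) (Fin n) ℝ) + 0 - (-(l • ofd S⁻¹))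
          = Matrix.diagonal (fun i => 1 - l * S⁻¹ i i) + l • S⁻¹ := by
        unfold ofd dd
        ext i j
        by_cases h : i = j
        · subst h
          simp [Matrix.add_apply, Matrix.sub_apply, Matrix.one_apply, Matrix.diagonal_apply_eq]
        · simp [Matrix.add_apply, Matrix.sub_apply, Matrix.one_apply_ne h,
            Matrix.diagonal_apply_ne _ h]
      rw [hrw]
      refine Matrix.PosSemidef.add ?_ (psd_smul hSinv.posSemidef hl.le)
      refine Matrix.posSemidef_diagonal_iff.mpr fun i => ?_
      have hle : S⁻¹ i i ≤ s :=
        Finset.single_le_sum (fun j _ => (hdiagpos j).le) (Finset.mem_univ i)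
      have hl1 : l * S⁻¹ i i ≤ 1 := by
        rw [hldef, inv_mul_le_iff₀ h1s]
        linarith
      linarith
    · -- last condition
      have heq : S⁻¹ + l⁻¹ • ((-(l • ofd S⁻¹)) - 0) = dd S⁻¹ := key_eq S hl
      rw [heq]
      exact hdd
  refine ⟨⟨l, hl, hC2⟩, l, 0, -(l • ofd S⁻¹), hC2, ?_⟩
  have h := hmain l hl
  rw [h.2.2.1]
  exact h.2.2.2
end

section
/- Let Σ̂ be an n×n real symmetric positive definite matrix and δ ∈ ℝ. Let λ > 0 and X be an n×n real symmetric matrix with Σ̂⁻¹ + λ⁻¹X ≻ 0, and set R := (Σ̂⁻¹ + λ⁻¹X)⁻¹. Then for every δλ ∈ ℝ and every n×n real symmetric matrix δX, the function g(t) := F(λ + t·δλ, X + t·δX) is defined for all t in a neighborhood of 0 and is twice differentiable at 0, with g''(0) = λ⁻¹·tr(R·δX·R·δX) − 2λ⁻²·δλ·tr(R·δX·R·X) + λ⁻³·δλ²·tr(R·X·R·X). -/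
open Polynomial Matrix

variable {n : ℕ}

noncomputable def qpoly (M : Matrix (Fin n) (Fin n) ℝ) : ℝ[X] :=
  (1 + (X : ℝ[X]) • M.map C).det

lemma qpoly_coeff_zero (M : Matrix (Fin n) (Fin n) ℝ) : (qpoly M).coeff 0 = 1 := by
  rw [qpoly, coeff_zero_eq_eval_zero, eval_det_add_X_smul, det_one, eval_one]

lemma qpoly_coeff_one (M : Matrix (Fin n) (Fin n) ℝ) : (qpoly M).coeff 1 = M.trace :=
  Matrix.coeff_det_one_add_X_smul_one M

lemma map_one_add_X_smul (φ : ℝ[X] →ₐ[ℝ] ℝ[X]) (M : Matrix (Fin n) (Fin n) ℝ) :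
    (1 + (X : ℝ[X]) • M.map C).map φ = 1 + (φ X) • M.map C := by
  ext i j
  simp only [Matrix.map_apply, Matrix.add_apply, Matrix.smul_apply, Matrix.one_apply,
    smul_eq_mul, map_add, apply_ite φ, _root_.map_one, _root_.map_zero, _root_.map_mul]
  rw [show (C (M i j) : ℝ[X]) = algebraMap ℝ ℝ[X] (M i j) from rfl, AlgHom.commutes]

lemma qpoly_map (φ : ℝ[X] →ₐ[ℝ] ℝ[X]) (M : Matrix (Fin n) (Fin n) ℝ) :
    φ (qpoly M) = (1 + (φ X) • M.map C).det := by
  rw [qpoly, ← map_one_add_X_smul φ M]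
  exact AlgHom.map_det φ _

noncomputable def rpoly (M : Matrix (Fin n) (Fin n) ℝ) : ℝ[X] := (qpoly M).divX.divX

lemma qpoly_decomp (M : Matrix (Fin n) (Fin n) ℝ) :
    qpoly M = 1 + M.trace • (X : ℝ[X]) + rpoly M * X ^ 2 :=
  Matrix.det_one_add_X_smul M

lemma qpoly_coeff_two (M : Matrix (Fin n) (Fin n) ℝ) :
    (qpoly M).coeff 2 = (rpoly M).coeff 0 := by
  rw [qpoly_decomp M]
  simp [coeff_add, coeff_smul, coeff_one, coeff_X, coeff_mul_X_pow']

lemma neg_map_C (M : Matrix (Fin n) (Fin n) ℝ) : (-M).map (C : ℝ →+* ℝ[X]) = -(M.map C) := by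
  ext i j; simp

lemma qpoly_neg_coeff_two (M : Matrix (Fin n) (Fin n) ℝ) :
    (qpoly (-M)).coeff 2 = (qpoly M).coeff 2 := by
  have h : qpoly (-M) = aeval (-X : ℝ[X]) (qpoly M) := by
    rw [qpoly_map (aeval (-X : ℝ[X])) M, qpoly]
    congr 1
    rw [aeval_X, neg_map_C, smul_neg, neg_smul]
  rw [h, qpoly_decomp M]
  simp only [map_add, _root_.map_one, _root_.map_smul, _root_.map_mul, map_pow, aeval_X]
  rw [neg_pow, neg_one_sq, one_mul]
  simp only [coeff_add, coeff_one, coeff_smul, coeff_mul_X_pow', smul_neg, coeff_neg]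
  have : (aeval (-X : ℝ[X]) (rpoly M)).coeff 0 = (rpoly M).coeff 0 := by
    rw [coeff_zero_eq_eval_zero, coeff_zero_eq_eval_zero, ← comp_eq_aeval, eval_comp]
    norm_num
  simp [this, coeff_X]

lemma coeff_two_aeval_X_sq (N : Matrix (Fin n) (Fin n) ℝ) :
    (aeval ((X : ℝ[X]) ^ 2) (qpoly N)).coeff 2 = N.trace := by
  rw [qpoly_decomp N]
  simp only [map_add, _root_.map_one, _root_.map_smul, _root_.map_mul, map_pow, aeval_X]
  rw [← pow_mul, show (2*2 : ℕ) = 4 from rfl]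
  simp [coeff_add, coeff_one, coeff_smul, coeff_X_pow, coeff_mul_X_pow']

lemma qpoly_mul_neg (M : Matrix (Fin n) (Fin n) ℝ) :
    qpoly M * qpoly (-M) = aeval ((X : ℝ[X]) ^ 2) (qpoly (-(M * M))) := by
  rw [qpoly_map ((aeval ((X : ℝ[X]) ^ 2))) (-(M * M)), qpoly, qpoly, ← det_mul, aeval_X]
  congr 1
  rw [neg_map_C, neg_map_C, show ((M * M).map (C : ℝ →+* ℝ[X])) = M.map C * M.map C from Matrix.map_mul]
  simp only [mul_add, add_mul, one_mul, mul_one, mul_neg, neg_neg, smul_neg,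
    Matrix.smul_mul, Matrix.mul_smul, smul_smul, ← sq, _root_.smul_pow]
  abel

lemma two_qpoly_coeff_two (M : Matrix (Fin n) (Fin n) ℝ) :
    2 * (qpoly M).coeff 2 = M.trace ^ 2 - (M * M).trace := by
  have h := congrArg (fun p => Polynomial.coeff p 2) (qpoly_mul_neg M)
  simp only [coeff_two_aeval_X_sq, trace_neg] at h
  rw [Polynomial.coeff_mul] at h
  rw [show (2:ℕ) = 0 + 2 from rfl] at h
  rw [Finset.Nat.sum_antidiagonal_eq_sum_range_succ (fun i j => (qpoly M).coeff i * (qpoly (-M)).coeff j)] at h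
  simp [Finset.sum_range_succ, qpoly_coeff_zero, qpoly_coeff_one, qpoly_neg_coeff_two,
    trace_neg] at h
  linarith

noncomputable def Ppoly (B0 B1 : Matrix (Fin n) (Fin n) ℝ) : ℝ[X] :=
  (B0.map C + (X : ℝ[X]) • B1.map C).det

lemma Ppoly_eval (B0 B1 : Matrix (Fin n) (Fin n) ℝ) (t : ℝ) :
    (Ppoly B0 B1).eval t = (B0 + t • B1).det := by
  have := (RingHom.map_det (evalRingHom t) (B0.map C + (X : ℝ[X]) • B1.map C)).symm
  rw [Ppoly, show Polynomial.eval t = ⇑(evalRingHom t) from rfl, ← this]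
  congr 1
  ext i j
  simp only [RingHom.mapMatrix_apply, Matrix.map_apply, Matrix.add_apply, Matrix.smul_apply,
    smul_eq_mul, eval_add, eval_mul, eval_C, eval_X, coe_evalRingHom, Pi.smul_apply]
  try ring

lemma Ppoly_eq (B0 B1 : Matrix (Fin n) (Fin n) ℝ) (hB0 : IsUnit B0.det) :
    Ppoly B0 B1 = C B0.det * qpoly (B0⁻¹ * B1) := by
  rw [Ppoly, qpoly, RingHom.map_det, ← det_mul]
  congr 1
  simp only [RingHom.mapMatrix_apply]
  rw [mul_add, mul_one, Matrix.mul_smul,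
    show (B0.map (C : ℝ →+* ℝ[X])) * ((B0⁻¹ * B1).map C) = ((B0 * (B0⁻¹ * B1)).map C) from (Matrix.map_mul).symm,
    Matrix.mul_nonsing_inv_cancel_left _ _ hB0]

lemma Ppoly_coeff_zero (B0 B1 : Matrix (Fin n) (Fin n) ℝ) (hB0 : IsUnit B0.det) :
    (Ppoly B0 B1).coeff 0 = B0.det := by
  rw [Ppoly_eq B0 B1 hB0, coeff_C_mul, qpoly_coeff_zero, mul_one]

lemma Ppoly_coeff_one (B0 B1 : Matrix (Fin n) (Fin n) ℝ) (hB0 : IsUnit B0.det) :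
    (Ppoly B0 B1).coeff 1 = B0.det * (B0⁻¹ * B1).trace := by
  rw [Ppoly_eq B0 B1 hB0, coeff_C_mul, qpoly_coeff_one]

lemma Ppoly_coeff_two (B0 B1 : Matrix (Fin n) (Fin n) ℝ) (hB0 : IsUnit B0.det) :
    2 * (Ppoly B0 B1).coeff 2
      = B0.det * ((B0⁻¹ * B1).trace ^ 2 - ((B0⁻¹ * B1) * (B0⁻¹ * B1)).trace) := by
  rw [Ppoly_eq B0 B1 hB0, coeff_C_mul, show 2 * (B0.det * (qpoly (B0⁻¹ * B1)).coeff 2)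
      = B0.det * (2 * (qpoly (B0⁻¹ * B1)).coeff 2) by ring, two_qpoly_coeff_two]

lemma dot_self_nonneg {n : ℕ} (x : Fin n → ℝ) : 0 ≤ x ⬝ᵥ x :=
  Finset.sum_nonneg fun i _ => mul_self_nonneg (x i)

lemma dot_self_pos {n : ℕ} {x : Fin n → ℝ} (hx : x ≠ 0) : 0 < x ⬝ᵥ x := by
  rcases lt_or_eq_of_le (dot_self_nonneg x) with h | h
  · exact h
  · exact absurd ((dotProduct_self_eq_zero).mp h.symm) hx

lemma sq_entry_le_dot {n : ℕ} (x : Fin n → ℝ) (i : Fin n) : x i * x i ≤ x ⬝ᵥ x :=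
  Finset.single_le_sum (fun j _ => mul_self_nonneg (x j)) (Finset.mem_univ i)

lemma posdef_lower_bound {n : ℕ} {A : Matrix (Fin n) (Fin n) ℝ} (hA : A.PosDef) :
    ∃ m > (0:ℝ), ∀ x : Fin n → ℝ, m * (x ⬝ᵥ x) ≤ x ⬝ᵥ A.mulVec x := by
  by_cases hne : ∃ x : Fin n → ℝ, x ≠ 0
  · obtain ⟨x0, hx0⟩ := hne
    set f : (Fin n → ℝ) → ℝ := fun x => x ⬝ᵥ A.mulVec x with hf
    have hcont : Continuous f := by
      have hfe : f = fun x => ∑ i, x i * ∑ j, A i j * x j := by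
        funext x; simp [hf, dotProduct, Matrix.mulVec]
      rw [hfe]
      apply continuous_finset_sum
      intro i _
      exact (continuous_apply i).mul (continuous_finset_sum _ fun j _ =>
        continuous_const.mul (continuous_apply j))
    set Sph : Set (Fin n → ℝ) := {x | x ⬝ᵥ x = 1} with hSph
    have hclosed : IsClosed Sph := by
      have : Continuous fun x : Fin n → ℝ => x ⬝ᵥ x := by
        apply continuous_finset_sum
        intro i _
        exact (continuous_apply i).mul (continuous_apply i)
      exact isClosed_eq this continuous_const
    have hbdd : Bornology.IsBounded Sph := by
      rw [Metric.isBounded_iff_subset_closedBall 0]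
      refine ⟨1, fun x hx => ?_⟩
      simp only [Metric.mem_closedBall, dist_zero_right]
      rw [pi_norm_le_iff_of_nonneg (by norm_num)]
      intro i
      rw [Real.norm_eq_abs, abs_le_one_iff_mul_self_le_one]
      calc x i * x i ≤ x ⬝ᵥ x := sq_entry_le_dot x i
        _ = 1 := hx
    have hcompact : IsCompact Sph := Metric.isCompact_of_isClosed_isBounded hclosed hbdd
    have hSne : Sph.Nonempty := by
      refine ⟨(Real.sqrt (x0 ⬝ᵥ x0))⁻¹ • x0, ?_⟩
      have h1 : (0:ℝ) < x0 ⬝ᵥ x0 := dot_self_pos hx0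
      have h2 : Real.sqrt (x0 ⬝ᵥ x0) ≠ 0 := by positivity
      simp only [hSph, Set.mem_setOf_eq, smul_dotProduct, dotProduct_smul, smul_eq_mul]
      rw [← mul_assoc, ← mul_inv]
      rw [← Real.sqrt_mul_self (le_of_lt h1)]
      field_simp
      rw [Real.sq_sqrt (Real.sqrt_nonneg _)]
    obtain ⟨u0, hu0, hmin⟩ := hcompact.exists_isMinOn hSne hcont.continuousOn
    have hu0ne : u0 ≠ 0 := by
      intro h
      rw [h] at hu0
      simp [hSph] at hu0
    refine ⟨f u0, ?_, ?_⟩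
    · have := hA.dotProduct_mulVec_pos hu0ne
      simpa [hf] using this
    · intro x
      by_cases hx : x = 0
      · simp [hx, hf]
      · have h1 : (0:ℝ) < x ⬝ᵥ x := dot_self_pos hx
        set r : ℝ := Real.sqrt (x ⬝ᵥ x) with hr
        have hrpos : 0 < r := Real.sqrt_pos.mpr h1
        have hrr : r * r = x ⬝ᵥ x := Real.mul_self_sqrt (le_of_lt h1)
        set u : Fin n → ℝ := r⁻¹ • x with hu
        have huu : u ⬝ᵥ u = (r⁻¹ * r⁻¹) * (x ⬝ᵥ x) := by
          simp only [hu, smul_dotProduct, dotProduct_smul, smul_eq_mul]; ring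
        have huS : u ∈ Sph := by
          simp only [hSph, Set.mem_setOf_eq, huu, ← hrr]
          field_simp
        have hfu : f u = (r⁻¹ * r⁻¹) * f x := by
          simp only [hf, hu, smul_dotProduct, dotProduct_smul, smul_eq_mul, Matrix.mulVec_smul]
          ring
        have h3 : f u0 ≤ f u := isMinOn_iff.mp hmin u huS
        rw [hfu] at h3
        have h2 : f u0 * (x ⬝ᵥ x) ≤ (r⁻¹ * r⁻¹) * f x * (x ⬝ᵥ x) :=
          mul_le_mul_of_nonneg_right h3 (le_of_lt h1)
        have h4 : (r⁻¹ * r⁻¹) * f x * (x ⬝ᵥ x) = f x := by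
          rw [← hrr]; field_simp; try ring
        calc f u0 * (x ⬝ᵥ x) ≤ (r⁻¹ * r⁻¹) * f x * (x ⬝ᵥ x) := h2
          _ = f x := h4
  · push_neg at hne
    refine ⟨1, one_pos, fun x => ?_⟩
    rw [hne x]
    simp

lemma dot_quad_bound {n : ℕ} (B : Matrix (Fin n) (Fin n) ℝ) (x : Fin n → ℝ) :
    |x ⬝ᵥ B.mulVec x| ≤ (∑ i, ∑ j, |B i j|) * (x ⬝ᵥ x) := by
  have h1 : x ⬝ᵥ B.mulVec x = ∑ i, ∑ j, x i * (B i j * x j) := by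
    simp [dotProduct, Matrix.mulVec, Finset.mul_sum]
  rw [h1]
  calc |∑ i, ∑ j, x i * (B i j * x j)| ≤ ∑ i, |∑ j, x i * (B i j * x j)| :=
        Finset.abs_sum_le_sum_abs _ _
    _ ≤ ∑ i, ∑ j, |x i * (B i j * x j)| :=
        Finset.sum_le_sum fun i _ => Finset.abs_sum_le_sum_abs _ _
    _ ≤ ∑ i, ∑ j, |B i j| * (x ⬝ᵥ x) := by
        apply Finset.sum_le_sum; intro i _
        apply Finset.sum_le_sum; intro j _
        rw [abs_mul, abs_mul, mul_comm (|x i|)]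
        rw [mul_assoc]
        apply mul_le_mul_of_nonneg_left _ (abs_nonneg _)
        have hi := sq_entry_le_dot x i
        have hj := sq_entry_le_dot x j
        have h2 : |x j| * |x i| ≤ (x i * x i + x j * x j) / 2 := by
          have := two_mul_le_add_sq (|x i|) (|x j|)
          rw [sq_abs, sq_abs] at this
          nlinarith [abs_nonneg (x i), abs_nonneg (x j)]
        nlinarith
    _ = (∑ i, ∑ j, |B i j|) * (x ⬝ᵥ x) := by rw [Finset.sum_mul]; congr 1; ext i; rw [Finset.sum_mul]

lemma posdef_perturb {n : ℕ} {A B : Matrix (Fin n) (Fin n) ℝ} (hA : A.PosDef)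
    (hB : B.IsHermitian) : ∃ ε > (0:ℝ), ∀ t : ℝ, |t| < ε → (A + t • B).PosDef := by
  obtain ⟨m, hm, hbound⟩ := posdef_lower_bound hA
  set K : ℝ := (∑ i, ∑ j, |B i j|) + 1 with hK
  have hK1 : (1:ℝ) ≤ K := by
    have : (0:ℝ) ≤ ∑ i, ∑ j, |B i j| :=
      Finset.sum_nonneg fun i _ => Finset.sum_nonneg fun j _ => abs_nonneg _
    linarith
  have hKpos : (0:ℝ) < K := by linarith
  refine ⟨m / K, div_pos hm hKpos, fun t ht => ?_⟩
  refine Matrix.PosDef.of_dotProduct_mulVec_pos ?_ ?_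
  · have hsm : (t • B).IsHermitian := by
      unfold Matrix.IsHermitian
      rw [Matrix.conjTranspose_smul, hB, star_trivial]
    exact hA.1.add hsm
  · intro x hx
    have hdd : (0:ℝ) < x ⬝ᵥ x := dot_self_pos hx
    have h1 : star x ⬝ᵥ (A + t • B).mulVec x = x ⬝ᵥ A.mulVec x + t * (x ⬝ᵥ B.mulVec x) := by
      simp [Matrix.add_mulVec, Matrix.smul_mulVec, dotProduct_add, dotProduct_smul]
    rw [h1]
    have h2 := hbound x
    have h3 := dot_quad_bound B x
    have h4 : |t * (x ⬝ᵥ B.mulVec x)| ≤ |t| * ((K - 1) * (x ⬝ᵥ x)) := by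
      rw [abs_mul]
      apply mul_le_mul_of_nonneg_left _ (abs_nonneg t)
      simpa [hK] using h3
    have h5 : |t| * K < m := by
      calc |t| * K < (m / K) * K := mul_lt_mul_of_pos_right ht hKpos
        _ = m := by field_simp
    have h6 := abs_le.mp h4
    have h7 : |t| * ((K - 1) * (x ⬝ᵥ x)) ≤ |t| * (K * (x ⬝ᵥ x)) := by
      apply mul_le_mul_of_nonneg_left _ (abs_nonneg t)
      nlinarith
    nlinarith [h6.1, abs_nonneg t]

lemma posdef_smul' {n : ℕ} {M : Matrix (Fin n) (Fin n) ℝ} (hM : M.PosDef) {c : ℝ} (hc : 0 < c) :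
    (c • M).PosDef := by
  refine Matrix.PosDef.of_dotProduct_mulVec_pos ?_ ?_
  · unfold Matrix.IsHermitian
    rw [Matrix.conjTranspose_smul, hM.1, star_trivial]
  · intro x hx
    have h1 : star x ⬝ᵥ (c • M).mulVec x = c * (star x ⬝ᵥ M.mulVec x) := by
      rw [Matrix.smul_mulVec, dotProduct_smul, smul_eq_mul]
    rw [h1]
    exact mul_pos hc (hM.dotProduct_mulVec_pos hx)

/-- `F(λ,X) := −λ(log det(Ŝ⁻¹ + λ⁻¹X) + log det Ŝ − δ)`. -/
noncomputable def Fobj {n : ℕ} (S : Matrix (Fin n) (Fin n) ℝ) (δ : ℝ)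
    (l : ℝ) (X : Matrix (Fin n) (Fin n) ℝ) : ℝ :=
  -(l * (Real.log ((S⁻¹ + l⁻¹ • X).det) + Real.log S.det - δ))

/-- Second variation of `F`. With `R := (Ŝ⁻¹ + λ⁻¹X)⁻¹`, the function
`g(t) := F(λ + t·δλ, X + t·δX)` is defined (i.e. the constraints hold) on a neighborhood
of `0` and is twice differentiable at `0` with
`g''(0) = λ⁻¹tr(RδXRδX) − 2λ⁻²δλ·tr(RδXRX) + λ⁻³δλ²·tr(RXRX)`. -/
theorem stmt13 {n : ℕ} (S : Matrix (Fin n) (Fin n) ℝ) (hS : S.PosDef) (δ : ℝ)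
    (l : ℝ) (hl : 0 < l) (X : Matrix (Fin n) (Fin n) ℝ) (hX : X.IsSymm)
    (hpd : (S⁻¹ + l⁻¹ • X).PosDef)
    (dl : ℝ) (dX : Matrix (Fin n) (Fin n) ℝ) (hdX : dX.IsSymm) :
    ∃ ε > (0 : ℝ),
      (∀ t : ℝ, |t| < ε →
        0 < l + t * dl ∧ (S⁻¹ + (l + t * dl)⁻¹ • (X + t • dX)).PosDef) ∧
      ∃ g' : ℝ → ℝ,
        (∀ t : ℝ, |t| < ε →
          HasDerivAt (fun s => Fobj S δ (l + s * dl) (X + s • dX)) (g' t) t) ∧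
        HasDerivAt g'
          (l⁻¹ * ((S⁻¹ + l⁻¹ • X)⁻¹ * dX * (S⁻¹ + l⁻¹ • X)⁻¹ * dX).trace
            - 2 * l⁻¹ ^ 2 * dl *
                ((S⁻¹ + l⁻¹ • X)⁻¹ * dX * (S⁻¹ + l⁻¹ • X)⁻¹ * X).trace
            + l⁻¹ ^ 3 * dl ^ 2 *
                ((S⁻¹ + l⁻¹ • X)⁻¹ * X * (S⁻¹ + l⁻¹ • X)⁻¹ * X).trace) 0 := by
  have hlne : l ≠ 0 := ne_of_gt hl
  set A0 : Matrix (Fin n) (Fin n) ℝ := S⁻¹ + l⁻¹ • X with hA0def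
  set R : Matrix (Fin n) (Fin n) ℝ := A0⁻¹ with hRdef
  have hA0 : A0.PosDef := hpd
  set B0 : Matrix (Fin n) (Fin n) ℝ := l • A0 with hB0def
  set B1 : Matrix (Fin n) (Fin n) ℝ := dl • S⁻¹ + dX with hB1def
  have hB0pd : B0.PosDef := posdef_smul' hA0 hl
  have hB0det : 0 < B0.det := hB0pd.det_pos
  have hB0unit : IsUnit B0.det := isUnit_iff_ne_zero.mpr (ne_of_gt hB0det)
  have hA0det : 0 < A0.det := hA0.det_pos
  have hA0unit : IsUnit A0.det := isUnit_iff_ne_zero.mpr (ne_of_gt hA0det)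
  have hSinvH : (S⁻¹).IsHermitian := hS.1.inv
  have hB1H : B1.IsHermitian := by
    unfold Matrix.IsHermitian
    rw [hB1def, Matrix.conjTranspose_add, Matrix.conjTranspose_smul, hSinvH, star_trivial,
      Matrix.conjTranspose_eq_transpose_of_trivial, hdX]
  have hB0alt : B0 = l • S⁻¹ + X := by
    rw [hB0def, hA0def, smul_add, smul_smul, mul_inv_cancel₀ hlne, one_smul]
  set P : Polynomial ℝ := Ppoly B0 B1 with hPdef
  obtain ⟨ε₂, hε₂, hpert⟩ := posdef_perturb hB0pd hB1H
  set ε : ℝ := min (l / (|dl| + 1)) ε₂ with hεdef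
  have hεpos : 0 < ε := lt_min (by positivity) hε₂
  have hlam : ∀ t : ℝ, |t| < ε → 0 < l + t * dl := by
    intro t ht
    have h1 : |t| < l / (|dl| + 1) := lt_of_lt_of_le ht (min_le_left _ _)
    have h2 : |t * dl| < l := by
      rw [abs_mul]
      calc |t| * |dl| ≤ |t| * (|dl| + 1) := by nlinarith [abs_nonneg t]
        _ < (l / (|dl| + 1)) * (|dl| + 1) := by
            apply mul_lt_mul_of_pos_right h1; positivity
        _ = l := by field_simp
    have := (abs_lt.mp h2).1
    linarith
  have hBt : ∀ t : ℝ, |t| < ε → (B0 + t • B1).PosDef := fun t ht =>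
    hpert t (lt_of_lt_of_le ht (min_le_right _ _))
  have hmat : ∀ t : ℝ, |t| < ε →
      S⁻¹ + (l + t * dl)⁻¹ • (X + t • dX) = (l + t * dl)⁻¹ • (B0 + t • B1) := by
    intro t ht
    have hlt := hlam t ht
    have h1 : B0 + t • B1 = (l + t * dl) • S⁻¹ + (X + t • dX) := by
      rw [hB0alt, hB1def]; module
    rw [h1]
    conv_rhs => rw [smul_add, smul_smul, inv_mul_cancel₀ (ne_of_gt hlt), one_smul]
  have hPev : ∀ t : ℝ, P.eval t = (B0 + t • B1).det := fun t => Ppoly_eval B0 B1 t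
  have hPpos : ∀ t : ℝ, |t| < ε → 0 < P.eval t := by
    intro t ht
    rw [hPev t]; exact (hBt t ht).det_pos
  set c : ℝ := Real.log S.det - δ with hcdef
  have hFeq : ∀ t : ℝ, |t| < ε →
      Fobj S δ (l + t * dl) (X + t • dX)
        = -((l + t * dl) * (Real.log (P.eval t) - (n : ℝ) * Real.log (l + t * dl) + c)) := by
    intro t ht
    have hlt := hlam t ht
    have hPt := hPpos t ht
    rw [Fobj, hmat t ht, Matrix.det_smul]
    simp only [Fintype.card_fin]
    rw [← hPev t, Real.log_mul (by positivity) (ne_of_gt hPt), Real.log_pow, Real.log_inv,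
      hcdef]
    push_cast
    ring
  set g' : ℝ → ℝ := fun t => -(dl * (Real.log (P.eval t) - (n : ℝ) * Real.log (l + t * dl) + c)
      + (l + t * dl) * (P.derivative.eval t / P.eval t) - (n : ℝ) * dl) with hg'def
  refine ⟨ε, hεpos, fun t ht => ⟨hlam t ht, ?_⟩, g', fun t ht => ?_, ?_⟩
  · rw [hmat t ht]
    exact posdef_smul' (hBt t ht) (inv_pos.mpr (hlam t ht))
  · -- first derivative
    have hlt := hlam t ht
    have hPt := hPpos t ht
    have hlam' : HasDerivAt (fun s : ℝ => l + s * dl) dl t := by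
      simpa using ((hasDerivAt_id t).mul_const dl).const_add l
    have hPde : HasDerivAt (fun s => P.eval s) (P.derivative.eval t) t := P.hasDerivAt t
    have hlogP : HasDerivAt (fun s => Real.log (P.eval s))
        (P.derivative.eval t / P.eval t) t := by
      exact hPde.log (ne_of_gt hPt)
    have hloglam : HasDerivAt (fun s => Real.log (l + s * dl)) (dl / (l + t * dl)) t := by
      exact hlam'.log (ne_of_gt hlt)
    have hinner : HasDerivAt
        (fun s => Real.log (P.eval s) - (n : ℝ) * Real.log (l + s * dl) + c)
        (P.derivative.eval t / P.eval t - (n : ℝ) * (dl / (l + t * dl))) t :=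
      (hlogP.sub (hloglam.const_mul (n : ℝ))).add_const c
    have hD := (hlam'.mul hinner).neg
    have heq : g' t = -(dl * (Real.log (P.eval t) - (n : ℝ) * Real.log (l + t * dl) + c)
        + (l + t * dl) * (P.derivative.eval t / P.eval t - (n : ℝ) * (dl / (l + t * dl)))) := by
      have hne : l + t * dl ≠ 0 := ne_of_gt hlt
      have key : (l + t * dl) * ((n:ℝ) * (dl / (l + t * dl))) = n * dl := by field_simp
      simp only [hg'def]
      linear_combination (-1:ℝ) * key
    rw [heq]
    apply hD.congr_of_eventuallyEq
    have hopen : IsOpen {s : ℝ | |s| < ε} := by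
      have hset : {s : ℝ | |s| < ε} = Metric.ball (0 : ℝ) ε := by
        ext s; simp [Metric.mem_ball, Real.dist_eq]
      rw [hset]; exact Metric.isOpen_ball
    filter_upwards [hopen.mem_nhds ht] with s hs using hFeq s hs
  · -- second derivative at 0
    have h0ε : |(0 : ℝ)| < ε := by simpa using hεpos
    have hlt := hlam 0 h0ε
    have hP0 := hPpos 0 h0ε
    set p0 : ℝ := P.eval 0 with hp0def
    set p1 : ℝ := P.derivative.eval 0 with hp1def
    set p2 : ℝ := P.derivative.derivative.eval 0 with hp2def
    have hlam' : HasDerivAt (fun s : ℝ => l + s * dl) dl 0 := by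
      simpa using ((hasDerivAt_id (0:ℝ)).mul_const dl).const_add l
    have hlogP : HasDerivAt (fun s => Real.log (P.eval s)) (p1 / p0) 0 := by
      exact (P.hasDerivAt 0).log (ne_of_gt hP0)
    have hloglam : HasDerivAt (fun s => Real.log (l + s * dl)) (dl / (l + 0 * dl)) 0 := by
      exact hlam'.log (ne_of_gt hlt)
    have hinner : HasDerivAt
        (fun s => Real.log (P.eval s) - (n : ℝ) * Real.log (l + s * dl) + c)
        (p1 / p0 - (n : ℝ) * (dl / (l + 0 * dl))) 0 :=
      (hlogP.sub (hloglam.const_mul (n : ℝ))).add_const c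
    have hquot : HasDerivAt (fun s => P.derivative.eval s / P.eval s)
        ((p2 * p0 - p1 * p1) / p0 ^ 2) 0 :=
      (P.derivative.hasDerivAt 0).div (P.hasDerivAt 0) (ne_of_gt hP0)
    have hprod := hlam'.mul hquot
    have hg'D : HasDerivAt g'
        (-((dl * (p1 / p0 - (n : ℝ) * (dl / (l + 0 * dl))))
          + (dl * (p1 / p0) + (l + 0 * dl) * ((p2 * p0 - p1 * p1) / p0 ^ 2)))) 0 := by
      rw [hg'def]
      exact (((hinner.const_mul dl).add hprod).sub_const ((n : ℝ) * dl)).neg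
    -- now identify the value
    convert hg'D using 1
    -- coefficient identities
    have hRA0 : R * A0 = 1 := Matrix.nonsing_inv_mul A0 hA0unit
    have hBinv : B0⁻¹ = l⁻¹ • R := by
      apply Matrix.inv_eq_left_inv
      rw [hB0def, Matrix.smul_mul, Matrix.mul_smul, smul_smul, inv_mul_cancel₀ hlne, one_smul,
        hRA0]
    have hSinvEq : S⁻¹ = A0 - l⁻¹ • X := by rw [hA0def]; abel
    have hB1alt : B1 = dl • A0 + dX - (dl * l⁻¹) • X := by
      rw [hB1def, hSinvEq]; module
    set E : Matrix (Fin n) (Fin n) ℝ := R * dX with hEdef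
    set Fm : Matrix (Fin n) (Fin n) ℝ := R * X with hFmdef
    have hC0 : B0⁻¹ * B1 = (l⁻¹ * dl) • (1 : Matrix (Fin n) (Fin n) ℝ)
        + l⁻¹ • E - (l⁻¹ * (dl * l⁻¹)) • Fm := by
      rw [hBinv, hB1alt, Matrix.smul_mul, Matrix.mul_sub, Matrix.mul_add, Matrix.mul_smul,
        Matrix.mul_smul, hRA0, hEdef, hFmdef]
      module
    set a : ℝ := E.trace with hadef
    set b : ℝ := Fm.trace with hbdef
    set u : ℝ := (E * E).trace with hudef
    set v : ℝ := (E * Fm).trace with hvdef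
    set w : ℝ := (Fm * Fm).trace with hwdef
    have hτ1 : (B0⁻¹ * B1).trace = (l⁻¹ * dl) * n + l⁻¹ * a - (l⁻¹ * (dl * l⁻¹)) * b := by
      rw [hC0]
      simp [Matrix.trace_add, Matrix.trace_sub, Matrix.trace_smul, Matrix.trace_one,
        smul_eq_mul]
      rw [hadef, hbdef]
    have hτ2 : ((B0⁻¹ * B1) * (B0⁻¹ * B1)).trace
        = (l⁻¹ * dl) ^ 2 * n + 2 * (l⁻¹ * dl) * (l⁻¹ * a)
          - 2 * (l⁻¹ * dl) * (l⁻¹ * (dl * l⁻¹)) * b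
          + l⁻¹ ^ 2 * u - 2 * l⁻¹ * (l⁻¹ * (dl * l⁻¹)) * v
          + (l⁻¹ * (dl * l⁻¹)) ^ 2 * w := by
      rw [hC0]
      simp only [Matrix.add_mul, Matrix.mul_add, Matrix.sub_mul, Matrix.mul_sub,
        Matrix.smul_mul, Matrix.mul_smul, smul_smul, Matrix.one_mul, Matrix.mul_one,
        Matrix.trace_add, Matrix.trace_sub, Matrix.trace_smul, smul_eq_mul, Matrix.trace_one]
      simp only [Fintype.card_fin]
      rw [Matrix.trace_mul_comm Fm E, ← hudef, ← hvdef, ← hwdef, ← hadef, ← hbdef]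
      push_cast
      ring
    have hp0 : p0 = B0.det := by
      rw [hp0def, ← coeff_zero_eq_eval_zero]; exact Ppoly_coeff_zero B0 B1 hB0unit
    have hp1 : p1 = B0.det * (B0⁻¹ * B1).trace := by
      rw [hp1def, ← coeff_zero_eq_eval_zero, coeff_derivative]
      simp [Ppoly_coeff_one B0 B1 hB0unit]
      exact Ppoly_coeff_one B0 B1 hB0unit
    have hp2 : p2 = B0.det * ((B0⁻¹ * B1).trace ^ 2 - ((B0⁻¹ * B1) * (B0⁻¹ * B1)).trace) := by
      rw [hp2def, ← coeff_zero_eq_eval_zero, coeff_derivative, coeff_derivative]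
      rw [← Ppoly_coeff_two B0 B1 hB0unit]
      push_cast
      ring
    -- rewrite target traces
    have htr1 : ((S⁻¹ + l⁻¹ • X)⁻¹ * dX * (S⁻¹ + l⁻¹ • X)⁻¹ * dX).trace = u := by
      rw [hudef, hEdef, Matrix.mul_assoc]
    have htr2 : ((S⁻¹ + l⁻¹ • X)⁻¹ * dX * (S⁻¹ + l⁻¹ • X)⁻¹ * X).trace = v := by
      rw [hvdef, hEdef, hFmdef, Matrix.mul_assoc]
    have htr3 : ((S⁻¹ + l⁻¹ • X)⁻¹ * X * (S⁻¹ + l⁻¹ • X)⁻¹ * X).trace = w := by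
      rw [hwdef, hFmdef, Matrix.mul_assoc]
    have hdne : B0.det ≠ 0 := ne_of_gt hB0det
    have hlz : l + 0 * dl = l := by ring
    rw [hlz]
    set T1 : ℝ := (B0⁻¹ * B1).trace with hT1def
    set T2 : ℝ := ((B0⁻¹ * B1) * (B0⁻¹ * B1)).trace with hT2def
    rw [htr1, htr2, htr3, hp1, hp2, hp0]
    have e1 : B0.det * T1 / B0.det = T1 := by field_simp
    have e2 : (B0.det * (T1 ^ 2 - T2) * B0.det - B0.det * T1 * (B0.det * T1)) / B0.det ^ 2
        = -T2 := by field_simp; ring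
    rw [e1, e2]
    rw [hτ1, hτ2]
    field_simp
    ring
end

section
/- Let Σ̂ be an n×n real symmetric positive definite matrix and suppose 0 < δ < δ_max(Σ̂) := log det( dd(Σ̂⁻¹)·Σ̂ ). If (λ*, X*) ∈ C_F satisfies F(λ*, X*) ≤ F(λ, X) for all (λ, X) ∈ C_F, then the matrix I − X* is singular, i.e. det(I − X*) = 0; in other words, every minimizer of F over C_F lies on the boundary of the constraint X ⪯ I. -/
open Matrix Finset in
lemma quadBound {n : ℕ} (M : Matrix (Fin n) (Fin n) ℝ) (v : Fin n → ℝ) :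
    v ⬝ᵥ (M *ᵥ v) ≤ (∑ i, ∑ j, |M i j|) * (v ⬝ᵥ v) := by
  have hsq : ∀ i : Fin n, v i * v i ≤ v ⬝ᵥ v := fun i =>
    Finset.single_le_sum (f := fun k => v k * v k) (fun k _ => mul_self_nonneg _) (mem_univ i)
  have key : ∀ i j : Fin n, v i * (M i j * v j) ≤ |M i j| * (v ⬝ᵥ v) := by
    intro i j
    have h1 : v i * (M i j * v j) ≤ |M i j| * (|v i| * |v j|) := by
      calc v i * (M i j * v j) ≤ |v i * (M i j * v j)| := le_abs_self _
        _ = |M i j| * (|v i| * |v j|) := by rw [abs_mul, abs_mul]; ring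
    have h2 : |v i| * |v j| ≤ v ⬝ᵥ v := by
      nlinarith [hsq i, hsq j, sq_nonneg (|v i| - |v j|), sq_abs (v i), sq_abs (v j)]
    calc v i * (M i j * v j) ≤ |M i j| * (|v i| * |v j|) := h1
      _ ≤ |M i j| * (v ⬝ᵥ v) := mul_le_mul_of_nonneg_left h2 (abs_nonneg _)
  calc v ⬝ᵥ (M *ᵥ v) = ∑ i, ∑ j, v i * (M i j * v j) := by
        simp [dotProduct, Matrix.mulVec, Finset.mul_sum]
    _ ≤ ∑ i, ∑ j, |M i j| * (v ⬝ᵥ v) :=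
        Finset.sum_le_sum fun i _ => Finset.sum_le_sum fun j _ => key i j
    _ = (∑ i, ∑ j, |M i j|) * (v ⬝ᵥ v) := by rw [Finset.sum_mul]; simp [Finset.sum_mul]

open Matrix in
lemma coercive {n : ℕ} {B : Matrix (Fin n) (Fin n) ℝ} (hB : B.PosDef) :
    ∃ c > 0, ∀ v : Fin n → ℝ, c * (v ⬝ᵥ v) ≤ v ⬝ᵥ (B *ᵥ v) := by
  set C : ℝ := ∑ i, ∑ j, |B⁻¹ i j| with hCdef
  have hC : 0 ≤ C := Finset.sum_nonneg fun i _ => Finset.sum_nonneg fun j _ => abs_nonneg _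
  refine ⟨(C + 1)⁻¹, by positivity, fun v => ?_⟩
  by_cases hv : v = 0
  · simp [hv]
  have hdet : B.det ≠ 0 := hB.det_pos.ne'
  have hBi : (B⁻¹).PosDef := hB.inv
  set w : Fin n → ℝ := B⁻¹ *ᵥ v with hw
  have hBw : B *ᵥ w = v := by
    rw [hw, Matrix.mulVec_mulVec, Matrix.mul_nonsing_inv _ (isUnit_iff_ne_zero.2 hdet),
      Matrix.one_mulVec]
  set s : ℝ := v ⬝ᵥ v with hs
  set d : ℝ := v ⬝ᵥ w with hd
  set a : ℝ := v ⬝ᵥ (B *ᵥ v) with ha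
  have hs0 : 0 < s := by
    have h1 : 0 ≤ s := Finset.sum_nonneg fun k _ => mul_self_nonneg _
    have h2 : s ≠ 0 := fun h => hv (dotProduct_self_eq_zero.mp h)
    exact h1.lt_of_ne' h2
  have hd0 : 0 < d := by
    have := hBi.dotProduct_mulVec_pos hv
    simpa [hd, hw] using this
  have hdC : d ≤ C * s := by
    have := quadBound B⁻¹ v
    simpa [hd, hw, hs, hCdef] using this
  have hsymB : Bᵀ = B := by
    have := hB.isHermitian
    rwa [Matrix.IsHermitian, Matrix.conjTranspose_eq_transpose_of_trivial] at this
  have h1 : v ⬝ᵥ (B *ᵥ w) = s := by rw [hBw]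
  have h2 : w ⬝ᵥ (B *ᵥ v) = s := by
    rw [Matrix.dotProduct_mulVec, ← hsymB, Matrix.vecMul_transpose, hBw, hs, dotProduct_comm]
  have h3 : w ⬝ᵥ (B *ᵥ w) = d := by rw [hBw, dotProduct_comm]
  set t : ℝ := s / d with ht
  have hexp : (v - t • w) ⬝ᵥ (B *ᵥ (v - t • w)) = a - 2 * t * s + t ^ 2 * d := by
    simp only [Matrix.mulVec_sub, Matrix.mulVec_smul, sub_dotProduct, dotProduct_sub,
      dotProduct_smul, smul_dotProduct, h1, h2, h3, smul_eq_mul, ← ha]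
    ring
  have hpsd : 0 ≤ (v - t • w) ⬝ᵥ (B *ᵥ (v - t • w)) := by
    have := hB.posSemidef.dotProduct_mulVec_nonneg (v - t • w)
    simpa using this
  rw [hexp] at hpsd
  have hkey : s ^ 2 / d ≤ a := by
    rw [ht] at hpsd
    have he : a - 2 * (s / d) * s + (s / d) ^ 2 * d = a - s ^ 2 / d := by
      field_simp; ring
    rw [he] at hpsd
    linarith
  have hstep : (C + 1)⁻¹ * s ≤ s ^ 2 / d := by
    rw [le_div_iff₀ hd0]
    have h4 : d ≤ (C + 1) * s := by nlinarith
    have h5 : (C + 1)⁻¹ * s * d ≤ (C + 1)⁻¹ * s * ((C + 1) * s) :=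
      mul_le_mul_of_nonneg_left h4 (by positivity)
    have h6 : (C + 1)⁻¹ * s * ((C + 1) * s) = s ^ 2 := by field_simp
    linarith
  linarith

open Matrix in
lemma posDef_of_det_ne_zero' {n : ℕ} {B : Matrix (Fin n) (Fin n) ℝ}
    (h : B.PosSemidef) (hd : B.det ≠ 0) : B.PosDef := by
  refine Matrix.PosDef.of_dotProduct_mulVec_pos h.1 fun v hv => ?_
  refine lt_of_le_of_ne (h.dotProduct_mulVec_nonneg v) fun heq => hv ?_
  have h0 : B *ᵥ v = 0 := (h.dotProduct_mulVec_zero_iff v).mp (by simpa using heq.symm)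
  have hvv : B⁻¹ *ᵥ (B *ᵥ v) = v := by
    rw [Matrix.mulVec_mulVec, Matrix.nonsing_inv_mul _ (isUnit_iff_ne_zero.2 hd),
      Matrix.one_mulVec]
  rw [h0] at hvv
  simpa using hvv.symm

open Matrix

/-- The constraint set `C_F`: `λ > 0`, `X` symmetric, `X ⪯ I`, `dd(X) ⪯ 0`,
`Ŝ⁻¹ + λ⁻¹X ≻ 0`. -/
def CF {n : ℕ} (S : Matrix (Fin n) (Fin n) ℝ)
    (l : ℝ) (X : Matrix (Fin n) (Fin n) ℝ) : Prop :=
  0 < l ∧ X.IsSymm ∧ (1 - X).PosSemidef ∧ (-(dd X)).PosSemidef ∧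
    (S⁻¹ + l⁻¹ • X).PosDef

/-- For `Ŝ ≻ 0` and `0 < δ < δ_max(Ŝ) := log det(dd(Ŝ⁻¹)Ŝ)`, every
minimizer `(λ*, X*)` of `F` over `C_F` satisfies `det(I − X*) = 0`, i.e. it lies on
the boundary of the constraint `X ⪯ I`. -/
theorem stmt15 {n : ℕ} (S : Matrix (Fin n) (Fin n) ℝ) (hS : S.PosDef)
    (δ : ℝ) (hδ : 0 < δ) (hδmax : δ < Real.log ((dd S⁻¹ * S).det))
    (l : ℝ) (X : Matrix (Fin n) (Fin n) ℝ) (hmem : CF S l X)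
    (hmin : ∀ l' X', CF S l' X' → Fobj S δ l X ≤ Fobj S δ l' X') :
    (1 - X).det = 0 := by
  by_contra hdet
  obtain ⟨hl, hsym, hIX, hddX, hA⟩ := hmem
  have hSinv : (S⁻¹).PosDef := hS.inv
  have hSinvSymm : (S⁻¹)ᵀ = S⁻¹ := by
    have := hSinv.isHermitian
    rwa [Matrix.IsHermitian, Matrix.conjTranspose_eq_transpose_of_trivial] at this
  have hdiagpos : ∀ i, 0 < S⁻¹ i i := by
    intro i
    have h := hSinv.dotProduct_mulVec_pos (x := Pi.single i (1:ℝ)) (by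
      intro h
      have := congrFun h i
      simp [Pi.single_eq_same] at this)
    simpa [Matrix.mulVec_single, single_dotProduct] using h
  -- Part 1 : Fobj S δ l X < 0
  set M0 : Matrix (Fin n) (Fin n) ℝ := dd S⁻¹ - S⁻¹ with hM0
  have hM0diag : ∀ i, M0 i i = 0 := by
    intro i; simp [hM0, dd, Matrix.sub_apply, Matrix.diagonal_apply_eq]
  set C0 : ℝ := ∑ i, ∑ j, |M0 i j| with hC0
  have hC0n : (0:ℝ) ≤ C0 :=
    Finset.sum_nonneg fun i _ => Finset.sum_nonneg fun j _ => abs_nonneg _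
  set t0 : ℝ := (C0 + 1)⁻¹ with ht0def
  have ht0 : 0 < t0 := by rw [ht0def]; positivity
  have hM0symm : M0ᵀ = M0 := by
    rw [hM0, Matrix.transpose_sub, hSinvSymm]
    congr 1
    exact Matrix.diagonal_transpose _
  have hSinvM0 : S⁻¹ + M0 = dd S⁻¹ := by rw [hM0]; abel
  have hddPD : (dd S⁻¹).PosDef := Matrix.PosDef.diagonal hdiagpos
  have hsmul0 : t0⁻¹ • (t0 • M0) = M0 := by
    rw [smul_smul, inv_mul_cancel₀ ht0.ne', one_smul]
  have hfeas1 : CF S t0 (t0 • M0) := by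
    refine ⟨ht0, ?_, ?_, ?_, ?_⟩
    · show (t0 • M0)ᵀ = t0 • M0
      rw [Matrix.transpose_smul, hM0symm]
    · refine Matrix.PosSemidef.of_dotProduct_mulVec_nonneg ?_ (fun v => ?_)
      · rw [Matrix.IsHermitian, Matrix.conjTranspose_eq_transpose_of_trivial,
          Matrix.transpose_sub, Matrix.transpose_one, Matrix.transpose_smul, hM0symm]
      · have hq := quadBound M0 v
        have he : star v ⬝ᵥ ((1 - t0 • M0) *ᵥ v) = v ⬝ᵥ v - t0 * (v ⬝ᵥ (M0 *ᵥ v)) := by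
          simp [Matrix.sub_mulVec, Matrix.one_mulVec, Matrix.smul_mulVec,
            dotProduct_sub, dotProduct_smul, smul_eq_mul]
        rw [he]
        have hvv : 0 ≤ v ⬝ᵥ v := Finset.sum_nonneg fun k _ => mul_self_nonneg _
        have hb : t0 * (v ⬝ᵥ (M0 *ᵥ v)) ≤ t0 * (C0 * (v ⬝ᵥ v)) :=
          mul_le_mul_of_nonneg_left hq ht0.le
        have ht0C : t0 * (C0 + 1) = 1 := by
          rw [ht0def]; field_simp
        nlinarith
    · have hz : dd (t0 • M0) = 0 := by
        unfold dd
        have : (fun i => (t0 • M0) i i) = fun _ => (0:ℝ) := by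
          funext i; simp [Matrix.smul_apply, hM0diag i]
        rw [this, Matrix.diagonal_zero]
      rw [hz, neg_zero]
      exact Matrix.PosSemidef.zero
    · rw [hsmul0, hSinvM0]
      exact hddPD
  have hval1 : Fobj S δ t0 (t0 • M0) = -(t0 * (Real.log ((dd S⁻¹ * S).det) - δ)) := by
    unfold Fobj
    rw [hsmul0, hSinvM0, Matrix.det_mul, Real.log_mul hddPD.det_pos.ne' hS.det_pos.ne']
  have hFneg : Fobj S δ l X < 0 := by
    have h := hmin t0 (t0 • M0) hfeas1
    rw [hval1] at h
    have hpos : 0 < Real.log ((dd S⁻¹ * S).det) - δ := by linarith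
    nlinarith
  -- Part 2 : scaling contradiction
  have hBpd : (1 - X).PosDef := posDef_of_det_ne_zero' hIX hdet
  obtain ⟨c, hc, hco⟩ := coercive hBpd
  have hexpand : ∀ v : Fin n → ℝ, v ⬝ᵥ ((1 - X) *ᵥ v) = v ⬝ᵥ v - v ⬝ᵥ (X *ᵥ v) := by
    intro v
    simp [Matrix.sub_mulVec, Matrix.one_mulVec, dotProduct_sub]
  have hXq : ∀ v : Fin n → ℝ, v ⬝ᵥ (X *ᵥ v) ≤ v ⬝ᵥ v := by
    intro v
    have h := hIX.dotProduct_mulVec_nonneg v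
    simp only [star_trivial] at h
    rw [hexpand v] at h
    linarith
  have hco' : ∀ v : Fin n → ℝ, c * (v ⬝ᵥ v) ≤ v ⬝ᵥ v - v ⬝ᵥ (X *ᵥ v) := by
    intro v
    have := hco v
    rwa [hexpand v] at this
  have h1c : (0:ℝ) < 1 + c := by linarith
  have hXdiag : ∀ i, X i i ≤ 0 := by
    intro i
    have heq : -(dd X) = Matrix.diagonal (fun i => -(X i i)) := by
      unfold dd; rw [Matrix.diagonal_neg]
    rw [heq] at hddX
    have := Matrix.posSemidef_diagonal_iff.mp hddX i
    linarith
  have hsmul2 : ((1 + c) * l)⁻¹ • ((1 + c) • X) = l⁻¹ • X := by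
    rw [smul_smul]
    congr 1
    field_simp
  have hfeas2 : CF S ((1 + c) * l) ((1 + c) • X) := by
    refine ⟨mul_pos h1c hl, ?_, ?_, ?_, ?_⟩
    · show ((1 + c) • X)ᵀ = (1 + c) • X
      rw [Matrix.transpose_smul, hsym.eq]
    · refine Matrix.PosSemidef.of_dotProduct_mulVec_nonneg ?_ (fun v => ?_)
      · rw [Matrix.IsHermitian, Matrix.conjTranspose_eq_transpose_of_trivial,
          Matrix.transpose_sub, Matrix.transpose_one, Matrix.transpose_smul, hsym.eq]
      · have he : star v ⬝ᵥ ((1 - (1 + c) • X) *ᵥ v)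
            = v ⬝ᵥ v - (1 + c) * (v ⬝ᵥ (X *ᵥ v)) := by
          simp [Matrix.sub_mulVec, Matrix.one_mulVec, Matrix.smul_mulVec,
            dotProduct_sub, dotProduct_smul, smul_eq_mul]
        rw [he]
        nlinarith [hco' v, hXq v]
    · have heq2 : -(dd ((1 + c) • X)) = Matrix.diagonal (fun i => -((1 + c) * X i i)) := by
        unfold dd
        rw [Matrix.diagonal_neg]
        rfl
      rw [heq2]
      exact Matrix.posSemidef_diagonal_iff.mpr fun i => by nlinarith [hXdiag i]
    · rw [hsmul2]
      exact hA
  have hval2 : Fobj S δ ((1 + c) * l) ((1 + c) • X) = (1 + c) * Fobj S δ l X := by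
    unfold Fobj
    rw [hsmul2]
    ring
  have hfin := hmin _ _ hfeas2
  rw [hval2] at hfin
  nlinarith
end

section
/- Let Σ̂ be an n×n real symmetric positive definite matrix and suppose 0 < δ < δ_max(Σ̂) := log det( dd(Σ̂⁻¹)·Σ̂ ). Then the minimizer of F over C_F is unique: if (λ₁, X₁) ∈ C_F and (λ₂, X₂) ∈ C_F both satisfy F(λᵢ, Xᵢ) ≤ F(λ, X) for all (λ, X) ∈ C_F, then λ₁ = λ₂ and X₁ = X₂. -/
open Matrix Real


variable {n : ℕ}

lemma posDef_smulR {M : Matrix (Fin n) (Fin n) ℝ} (hM : M.PosDef) {c : ℝ} (hc : 0 < c) :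
    (c • M).PosDef := by
  refine Matrix.PosDef.of_dotProduct_mulVec_pos ?_ ?_
  · have h : Mᵀ = M := by simpa using hM.1.eq
    simp [Matrix.IsHermitian, conjTranspose_smul, h]
  · intro x hx
    have := hM.dotProduct_mulVec_pos hx
    rw [smul_mulVec, dotProduct_smul, smul_eq_mul]
    exact mul_pos hc this

lemma posDef_conj {A B : Matrix (Fin n) (Fin n) ℝ} (hA : A.PosDef) (hB : IsUnit B.det) :
    (Bᴴ * A * B).PosDef := by
  refine Matrix.PosDef.of_dotProduct_mulVec_pos (isHermitian_conjTranspose_mul_mul B hA.1) fun x hx => ?_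
  have hBx : B *ᵥ x ≠ 0 := by
    intro h
    exact hx (Matrix.mulVec_injective_iff_isUnit.2 ((isUnit_iff_isUnit_det B).2 hB)
      (by simpa using h))
  have := hA.dotProduct_mulVec_pos hBx
  simpa only [star_mulVec, dotProduct_mulVec, vecMul_vecMul] using this

lemma key_diag {M : Matrix (Fin n) (Fin n) ℝ} (hM : M.IsHermitian) (a b : ℝ) :
    a • (1 : Matrix (Fin n) (Fin n) ℝ) + b • M
      = (hM.eigenvectorUnitary : Matrix (Fin n) (Fin n) ℝ)
        * (Matrix.diagonal (fun i => a + b * hM.eigenvalues i))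
        * star (hM.eigenvectorUnitary : Matrix (Fin n) (Fin n) ℝ) := by
  set U := (hM.eigenvectorUnitary : Matrix (Fin n) (Fin n) ℝ) with hUdef
  have hU : U * star U = 1 := mem_unitaryGroup_iff.mp hM.eigenvectorUnitary.2
  have hdiag : (Matrix.diagonal (fun i => a + b * hM.eigenvalues i))
      = a • (1 : Matrix (Fin n) (Fin n) ℝ)
        + b • Matrix.diagonal (RCLike.ofReal ∘ hM.eigenvalues) := by
    ext i j
    rcases eq_or_ne i j with rfl | hij
    · simp [Matrix.diagonal_apply_eq, Matrix.one_apply_eq]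
    · simp [Matrix.diagonal_apply_ne _ hij, Matrix.one_apply_ne hij]
  rw [hdiag, mul_add, add_mul, mul_smul_comm, mul_smul_comm, smul_mul_assoc, smul_mul_assoc,
    mul_one, hU]
  exact congrArg (fun Y => a • (1 : Matrix (Fin n) (Fin n) ℝ) + b • Y) hM.spectral_theorem

lemma det_smul_one_add_smul {M : Matrix (Fin n) (Fin n) ℝ} (hM : M.IsHermitian) (a b : ℝ) :
    (a • (1 : Matrix (Fin n) (Fin n) ℝ) + b • M).det
      = ∏ i, (a + b * hM.eigenvalues i) := by
  rw [key_diag hM a b, det_mul_right_comm]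
  have hU : (hM.eigenvectorUnitary : Matrix (Fin n) (Fin n) ℝ)
      * star (hM.eigenvectorUnitary : Matrix (Fin n) (Fin n) ℝ) = 1 :=
    mem_unitaryGroup_iff.mp hM.eigenvectorUnitary.2
  rw [hU, one_mul, det_diagonal]

lemma eq_one_of_eigenvalues_one {M : Matrix (Fin n) (Fin n) ℝ} (hM : M.IsHermitian)
    (h : ∀ i, hM.eigenvalues i = 1) : M = 1 := by
  have := hM.spectral_theorem
  have hd : Matrix.diagonal (RCLike.ofReal ∘ hM.eigenvalues)
      = (1 : Matrix (Fin n) (Fin n) ℝ) := by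
    ext i j
    rcases eq_or_ne i j with rfl | hij
    · simp [Matrix.diagonal_apply_eq, Matrix.one_apply_eq, h i]
    · simp [Matrix.diagonal_apply_ne _ hij, Matrix.one_apply_ne hij]
  rw [hd, Unitary.conjStarAlgAut_apply, mul_one] at this
  rw [this, mem_unitaryGroup_iff.mp hM.eigenvectorUnitary.2]

lemma det_eq_prod_eig {M : Matrix (Fin n) (Fin n) ℝ} (hM : M.IsHermitian) :
    M.det = ∏ i, hM.eigenvalues i := by
  simpa using hM.det_eq_prod_eigenvalues

lemma log_ineq {a b μ : ℝ} (ha : 0 < a) (hb : 0 < b) (hab : a + b = 1) (hμ : 0 < μ) :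
    b * Real.log μ ≤ Real.log (a + b * μ) := by
  rcases eq_or_ne μ 1 with rfl | hne
  · simp [hab]
  · have h := strictConcaveOn_log_Ioi.2 (Set.mem_Ioi.mpr one_pos) (Set.mem_Ioi.mpr hμ)
      (Ne.symm hne) ha hb hab
    simp only [smul_eq_mul, Real.log_one, mul_zero, zero_add, mul_one] at h
    linarith

lemma log_ineq_strict {a b μ : ℝ} (ha : 0 < a) (hb : 0 < b) (hab : a + b = 1) (hμ : 0 < μ)
    (hne : μ ≠ 1) : b * Real.log μ < Real.log (a + b * μ) := by
  have h := strictConcaveOn_log_Ioi.2 (Set.mem_Ioi.mpr one_pos) (Set.mem_Ioi.mpr hμ)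
    (Ne.symm hne) ha hb hab
  simp only [smul_eq_mul, Real.log_one, mul_zero, zero_add, mul_one] at h
  linarith

open scoped MatrixOrder in
lemma logdet_strictConcave {A B : Matrix (Fin n) (Fin n) ℝ} (hA : A.PosDef) (hB : B.PosDef)
    (hAB : A ≠ B) {a b : ℝ} (ha : 0 < a) (hb : 0 < b) (hab : a + b = 1) :
    a * Real.log A.det + b * Real.log B.det < Real.log (a • A + b • B).det := by
  classical
  set C := CFC.sqrt A with hCdef
  have hCC : C * C = A := CFC.sqrt_mul_sqrt_self A hA.posSemidef.nonneg
  have hCH : C.IsHermitian := (CFC.sqrt_nonneg A).posSemidef.1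
  have hdetA : (0:ℝ) < A.det := hA.det_pos
  have hA2 : A.det = C.det * C.det := by rw [← hCC, det_mul]
  have hdetC0 : C.det ≠ 0 := by
    intro h; rw [hA2, h, mul_zero] at hdetA; exact lt_irrefl _ hdetA
  have hCunit : IsUnit C.det := isUnit_iff_ne_zero.mpr hdetC0
  have hCinvH : (C⁻¹).IsHermitian := hCH.inv
  set M := C⁻¹ * B * C⁻¹ with hMdef
  have hM : M.PosDef := by
    have h1 := posDef_conj hB (C.isUnit_nonsing_inv_det hCunit)
    rwa [hCinvH.eq] at h1
  have hBM : C * M * C = B := by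
    have h2 : C * (C⁻¹ * B * C⁻¹) * C = (C * C⁻¹) * B * (C⁻¹ * C) := by
      noncomm_ring
    rw [hMdef, h2, mul_nonsing_inv _ hCunit, nonsing_inv_mul _ hCunit, one_mul, mul_one]
  have key : a • A + b • B = C * (a • (1 : Matrix (Fin n) (Fin n) ℝ) + b • M) * C := by
    rw [mul_add, add_mul, mul_smul_comm, mul_smul_comm, smul_mul_assoc, smul_mul_assoc,
      mul_one, hCC, hBM]
  have hMne : M ≠ 1 := by
    intro h
    apply hAB
    rw [← hCC, ← hBM, h, mul_one]
  set μ := hM.1.eigenvalues with hμdef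
  have hμpos : ∀ i, 0 < μ i := hM.eigenvalues_pos
  have hdetM : M.det = ∏ i, μ i := det_eq_prod_eig hM.1
  have hdetMpos : 0 < M.det := hM.det_pos
  have hdetB : B.det = C.det * M.det * C.det := by rw [← hBM, det_mul, det_mul]
  have hdmid : (a • A + b • B).det = C.det * (∏ i, (a + b * μ i)) * C.det := by
    rw [key, det_mul, det_mul, det_smul_one_add_smul hM.1]
  have hexists : ∃ i, μ i ≠ 1 := by
    by_contra h
    push_neg at h
    exact hMne (eq_one_of_eigenvalues_one hM.1 h)
  obtain ⟨i₀, hi₀⟩ := hexists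
  have habμ : ∀ i, 0 < a + b * μ i := fun i => add_pos ha (mul_pos hb (hμpos i))
  have hlogA : Real.log A.det = 2 * Real.log C.det := by
    rw [hA2, Real.log_mul hdetC0 hdetC0]; ring
  have hlogM : Real.log M.det = ∑ i, Real.log (μ i) := by
    rw [hdetM, Real.log_prod]
    exact fun i _ => (hμpos i).ne'
  have hlogB : Real.log B.det = 2 * Real.log C.det + Real.log M.det := by
    rw [hdetB, Real.log_mul (mul_ne_zero hdetC0 hdetMpos.ne') hdetC0,
      Real.log_mul hdetC0 hdetMpos.ne']
    ring
  have hlogmid : Real.log (a • A + b • B).det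
      = 2 * Real.log C.det + ∑ i, Real.log (a + b * μ i) := by
    have hprod : (∏ i, (a + b * μ i)) ≠ 0 := (Finset.prod_pos (fun i _ => habμ i)).ne'
    rw [hdmid, Real.log_mul (mul_ne_zero hdetC0 hprod) hdetC0,
      Real.log_mul hdetC0 hprod, Real.log_prod (fun i _ => (habμ i).ne')]
    ring
  have hsum : ∑ i, b * Real.log (μ i) < ∑ i, Real.log (a + b * μ i) := by
    refine Finset.sum_lt_sum (fun i _ => log_ineq ha hb hab (hμpos i)) ⟨i₀, Finset.mem_univ _, ?_⟩
    exact log_ineq_strict ha hb hab (hμpos i₀) hi₀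
  rw [← Finset.mul_sum] at hsum
  have hcomb : a * (2 * Real.log C.det) + b * (2 * Real.log C.det) = 2 * Real.log C.det := by
    rw [← add_mul, hab, one_mul]
  rw [hlogA, hlogB, hlogmid, hlogM]
  nlinarith [hsum, hcomb]

lemma herm_of_symm {M : Matrix (Fin n) (Fin n) ℝ} (h : M.IsSymm) : M.IsHermitian := by
  have : Mᴴ = Mᵀ := by ext i j; simp [Matrix.conjTranspose_apply]
  rw [Matrix.IsHermitian, this, h]

lemma symm_of_herm {M : Matrix (Fin n) (Fin n) ℝ} (h : M.IsHermitian) : M.IsSymm := by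
  simpa [Matrix.IsSymm] using h.eq

lemma diag_pos {M : Matrix (Fin n) (Fin n) ℝ} (hM : M.PosDef) (i : Fin n) : 0 < M i i := by
  have h := hM.dotProduct_mulVec_pos (x := Pi.single i 1) (by simp [Pi.single_eq_same, Function.ne_iff])
  simpa [dotProduct, Matrix.mulVec, Pi.single_apply, Finset.sum_ite_eq,
    dotProduct_single] using h

lemma quad_bound (E : Matrix (Fin n) (Fin n) ℝ) (x : Fin n → ℝ) :
    x ⬝ᵥ (E *ᵥ x) ≤ (∑ i, ∑ j, |E i j|) * (∑ k, x k * x k) := by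
  have hSq : (0:ℝ) ≤ ∑ k, x k * x k :=
    Finset.sum_nonneg fun k _ => mul_self_nonneg _
  have hterm : ∀ i j : Fin n, x i * (E i j * x j) ≤ |E i j| * (∑ k, x k * x k) := by
    intro i j
    have hxi : x i * x i ≤ ∑ k, x k * x k :=
      Finset.single_le_sum (f := fun k => x k * x k) (fun k _ => mul_self_nonneg _)
        (Finset.mem_univ i)
    have hxj : x j * x j ≤ ∑ k, x k * x k :=
      Finset.single_le_sum (f := fun k => x k * x k) (fun k _ => mul_self_nonneg _)
        (Finset.mem_univ j)
    have h1 : |x i| * |x j| ≤ ∑ k, x k * x k := by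
      nlinarith [sq_nonneg (|x i| - |x j|), abs_mul_abs_self (x i), abs_mul_abs_self (x j),
        abs_nonneg (x i), abs_nonneg (x j)]
    calc x i * (E i j * x j) ≤ |x i * (E i j * x j)| := le_abs_self _
      _ = |E i j| * (|x i| * |x j|) := by rw [abs_mul, abs_mul]; ring
      _ ≤ |E i j| * (∑ k, x k * x k) :=
          mul_le_mul_of_nonneg_left h1 (abs_nonneg _)
  calc x ⬝ᵥ (E *ᵥ x) = ∑ i, ∑ j, x i * (E i j * x j) := by
        simp only [dotProduct, Matrix.mulVec, Finset.mul_sum]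
    _ ≤ ∑ i, ∑ j, |E i j| * (∑ k, x k * x k) :=
        Finset.sum_le_sum fun i _ => Finset.sum_le_sum fun j _ => hterm i j
    _ = (∑ i, ∑ j, |E i j|) * (∑ k, x k * x k) := by
        rw [Finset.sum_mul]
        exact Finset.sum_congr rfl fun i _ => (Finset.sum_mul _ _ _).symm

lemma exists_neg_point {n : ℕ} (S : Matrix (Fin n) (Fin n) ℝ) (hS : S.PosDef) (δ : ℝ)
    (hδmax : δ < Real.log ((dd S⁻¹ * S).det)) :
    ∃ l X, CF S l X ∧ Fobj S δ l X < 0 := by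
  classical
  have hSinv : S⁻¹.PosDef := hS.inv
  set E : Matrix (Fin n) (Fin n) ℝ := dd S⁻¹ - S⁻¹ with hEdef
  have hEsymm : E.IsSymm := by
    have h1 : (dd S⁻¹).IsSymm := Matrix.isSymm_diagonal _
    have h2 : (S⁻¹).IsSymm := symm_of_herm hSinv.1
    rw [hEdef, Matrix.IsSymm, Matrix.transpose_sub, h1, h2]
  set T : ℝ := ∑ i, ∑ j, |E i j| with hTdef
  have hT : 0 ≤ T := Finset.sum_nonneg fun i _ => Finset.sum_nonneg fun j _ => abs_nonneg _
  set l₀ : ℝ := (T + 1)⁻¹ with hl₀def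
  have hl₀ : 0 < l₀ := by positivity
  have hE0 : ∀ i, E i i = 0 := by
    intro i
    simp [hEdef, dd, Matrix.diagonal_apply_eq]
  refine ⟨l₀, l₀ • E, ⟨hl₀, hEsymm.smul l₀, ?_, ?_, ?_⟩, ?_⟩
  · -- 1 - l₀ • E PSD
    refine Matrix.PosSemidef.of_dotProduct_mulVec_nonneg ?_ ?_
    · have hEh : E.IsHermitian := herm_of_symm hEsymm
      have h : Eᵀ = E := hEsymm
      simp [Matrix.IsHermitian, Matrix.conjTranspose_sub, Matrix.conjTranspose_smul, hEh.eq, h]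
    · intro x
      have hq := quad_bound E x
      have hSq : (0:ℝ) ≤ ∑ k, x k * x k :=
        Finset.sum_nonneg fun k _ => mul_self_nonneg _
      have key : star x ⬝ᵥ ((1 - l₀ • E) *ᵥ x)
          = (∑ k, x k * x k) - l₀ * (x ⬝ᵥ (E *ᵥ x)) := by
        rw [star_trivial, Matrix.sub_mulVec, dotProduct_sub, Matrix.smul_mulVec,
          dotProduct_smul, Matrix.one_mulVec, smul_eq_mul]
        simp [dotProduct]
      rw [key]
      have h1 : l₀ * (x ⬝ᵥ (E *ᵥ x)) ≤ l₀ * (T * (∑ k, x k * x k)) :=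
        mul_le_mul_of_nonneg_left hq hl₀.le
      have h2 : l₀ * T ≤ 1 := by
        rw [hl₀def, inv_mul_le_iff₀ (by linarith)]
        linarith
      nlinarith
  · -- -(dd (l₀ • E)) PSD
    have hdd : dd (l₀ • E) = 0 := by
      ext i j
      rcases eq_or_ne i j with rfl | hij
      · simp [dd, Matrix.diagonal_apply_eq, hE0 i]
      · simp [dd, Matrix.diagonal_apply_ne _ hij]
    rw [hdd, neg_zero]
    exact Matrix.PosSemidef.zero
  · -- S⁻¹ + l₀⁻¹ • (l₀ • E) PD
    have hmat : S⁻¹ + l₀⁻¹ • (l₀ • E) = dd S⁻¹ := by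
      rw [smul_smul, inv_mul_cancel₀ hl₀.ne', one_smul, hEdef, add_sub_cancel]
    rw [hmat]
    exact Matrix.PosDef.diagonal fun i => diag_pos hSinv i
  · -- Fobj value negative
    have hmat : S⁻¹ + l₀⁻¹ • (l₀ • E) = dd S⁻¹ := by
      rw [smul_smul, inv_mul_cancel₀ hl₀.ne', one_smul, hEdef, add_sub_cancel]
    have hddPD : (dd S⁻¹).PosDef := Matrix.PosDef.diagonal fun i => diag_pos hSinv i
    have hlog : Real.log (dd S⁻¹).det + Real.log S.det = Real.log ((dd S⁻¹ * S).det) := by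
      rw [Matrix.det_mul, Real.log_mul hddPD.det_pos.ne' hS.det_pos.ne']
    rw [Fobj, hmat]
    have : 0 < Real.log (dd S⁻¹).det + Real.log S.det - δ := by
      rw [hlog]; linarith
    nlinarith


lemma posSemidef_smulR {n : ℕ} {M : Matrix (Fin n) (Fin n) ℝ} (hM : M.PosSemidef) {c : ℝ}
    (hc : 0 ≤ c) : (c • M).PosSemidef := by
  refine Matrix.PosSemidef.of_dotProduct_mulVec_nonneg ?_ ?_
  · have h : Mᵀ = M := by simpa using hM.1.eq
    simp [Matrix.IsHermitian, Matrix.conjTranspose_smul, h]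
  · intro x
    have := hM.dotProduct_mulVec_nonneg x
    rw [Matrix.smul_mulVec, dotProduct_smul, smul_eq_mul]
    exact mul_nonneg hc this


/-- For `Ŝ ≻ 0` and `0 < δ < δ_max(Ŝ) := log det(dd(Ŝ⁻¹)Ŝ)`, the
minimizer of `F` over `C_F` is unique. -/
theorem stmt17 {n : ℕ} (S : Matrix (Fin n) (Fin n) ℝ) (hS : S.PosDef)
    (δ : ℝ) (hδ : 0 < δ) (hδmax : δ < Real.log ((dd S⁻¹ * S).det))
    (l₁ l₂ : ℝ) (X₁ X₂ : Matrix (Fin n) (Fin n) ℝ)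
    (h₁ : CF S l₁ X₁) (h₂ : CF S l₂ X₂)
    (hmin₁ : ∀ l X, CF S l X → Fobj S δ l₁ X₁ ≤ Fobj S δ l X)
    (hmin₂ : ∀ l X, CF S l X → Fobj S δ l₂ X₂ ≤ Fobj S δ l X) :
    l₁ = l₂ ∧ X₁ = X₂ := by
  classical
  obtain ⟨hl₁, hX₁s, hX₁I, hX₁d, hU₁⟩ := h₁
  obtain ⟨hl₂, hX₂s, hX₂I, hX₂d, hU₂⟩ := h₂
  set U₁ : Matrix (Fin n) (Fin n) ℝ := S⁻¹ + l₁⁻¹ • X₁ with hU₁def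
  set U₂ : Matrix (Fin n) (Fin n) ℝ := S⁻¹ + l₂⁻¹ • X₂ with hU₂def
  have hm12 : Fobj S δ l₁ X₁ = Fobj S δ l₂ X₂ :=
    le_antisymm (hmin₁ _ _ ⟨hl₂, hX₂s, hX₂I, hX₂d, hU₂⟩)
      (hmin₂ _ _ ⟨hl₁, hX₁s, hX₁I, hX₁d, hU₁⟩)
  obtain ⟨l₀, X₀, hCF₀, hneg⟩ := exists_neg_point S hS δ hδmax
  have hmneg : Fobj S δ l₁ X₁ < 0 := lt_of_le_of_lt (hmin₁ _ _ hCF₀) hneg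
  have hF1 : Fobj S δ l₁ X₁ = -(l₁ * (Real.log U₁.det + Real.log S.det - δ)) := rfl
  have hF2 : Fobj S δ l₂ X₂ = -(l₂ * (Real.log U₂.det + Real.log S.det - δ)) := rfl
  by_cases hUU : U₁ = U₂
  · -- same matrix; conclude from values
    have hXX : l₁⁻¹ • X₁ = l₂⁻¹ • X₂ := by
      have := hUU
      rw [hU₁def, hU₂def, add_right_inj] at this
      exact this
    have hDpos : 0 < Real.log U₁.det + Real.log S.det - δ := by
      rw [hF1] at hmneg
      nlinarith
    have hll : l₁ = l₂ := by
      rw [hF1, hF2, hUU] at hm12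
      have h0 : (l₁ - l₂) * (Real.log U₂.det + Real.log S.det - δ) = 0 := by linarith
      rcases mul_eq_zero.mp h0 with h | h
      · linarith
      · rw [hUU] at hDpos; linarith
    refine ⟨hll, ?_⟩
    rw [hll] at hXX
    have := smul_right_injective (Matrix (Fin n) (Fin n) ℝ) (inv_ne_zero hl₂.ne') hXX
    exact this
  · -- distinct matrices: strict convexity contradiction
    exfalso
    have hsum12 : 0 < l₁ + l₂ := by linarith
    set a : ℝ := l₁ / (l₁ + l₂) with hadef
    set b : ℝ := l₂ / (l₁ + l₂) with hbdef
    have ha : 0 < a := div_pos hl₁ hsum12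
    have hb : 0 < b := div_pos hl₂ hsum12
    have hab : a + b = 1 := by
      rw [hadef, hbdef]
      field_simp
    set lm : ℝ := (l₁ + l₂) / 2 with hlmdef
    have hlm : 0 < lm := by positivity
    set Xm : Matrix (Fin n) (Fin n) ℝ := (2:ℝ)⁻¹ • (X₁ + X₂) with hXmdef
    have hmid : S⁻¹ + lm⁻¹ • Xm = a • U₁ + b • U₂ := by
      rw [hU₁def, hU₂def]
      ext i j
      simp only [Matrix.add_apply, Matrix.smul_apply, smul_eq_mul, hXmdef, hadef, hbdef, hlmdef]
      field_simp
      ring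
    have hmidPD : (S⁻¹ + lm⁻¹ • Xm).PosDef := by
      rw [hmid]
      exact (posDef_smulR hU₁ ha).add (posDef_smulR hU₂ hb)
    have hCFmid : CF S lm Xm := by
      refine ⟨hlm, (hX₁s.add hX₂s).smul _, ?_, ?_, hmidPD⟩
      · have h : (1 : Matrix (Fin n) (Fin n) ℝ) - Xm
            = (2:ℝ)⁻¹ • ((1 - X₁) + (1 - X₂)) := by
          ext i j
          rcases eq_or_ne i j with rfl | hij
          · simp [hXmdef, Matrix.one_apply_eq]; ring
          · simp [hXmdef, Matrix.one_apply_ne hij]; ring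
        rw [h]
        exact posSemidef_smulR (hX₁I.add hX₂I) (by norm_num)
      · have h : -(dd Xm) = (2:ℝ)⁻¹ • ((-(dd X₁)) + (-(dd X₂))) := by
          ext i j
          rcases eq_or_ne i j with rfl | hij
          · simp [dd, hXmdef, Matrix.diagonal_apply_eq]; ring
          · simp [dd, Matrix.diagonal_apply_ne _ hij]
        rw [h]
        exact posSemidef_smulR (hX₁d.add hX₂d) (by norm_num)
    have hstrict := logdet_strictConcave hU₁ hU₂ hUU ha hb hab
    have hFmid : Fobj S δ lm Xm
        = -(lm * (Real.log (a • U₁ + b • U₂).det + Real.log S.det - δ)) := by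
      rw [Fobj, hmid]
    have hle := hmin₁ _ _ hCFmid
    rw [hFmid] at hle
    rw [hF1] at hle hm12 hmneg
    rw [hF2] at hm12
    set D₁ := Real.log U₁.det
    set D₂ := Real.log U₂.det
    set L := Real.log (a • U₁ + b • U₂).det
    set c := Real.log S.det - δ with hcdef
    -- hle : -(l₁ * (D₁ + c)) ≤ -(lm * (L + c))
    -- hstrict : a * D₁ + b * D₂ < L
    -- hm12 : -(l₁ * (D₁ + c)) = -(l₂ * (D₂ + c))
    have hkey : lm * (a * D₁ + b * D₂ + c)
        = (l₁ * (D₁ + c) + l₂ * (D₂ + c)) / 2 := by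
      rw [hlmdef, hadef, hbdef]
      field_simp
      ring
    nlinarith [mul_lt_mul_of_pos_left hstrict hlm]
end
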